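/- arXiv:1106.5930 — 5 statements merged into one kernel-verified Lean document; each statement's English description precedes it below -/
import Mathlib

section
/- If C is a binary self-dual code of length n with n ≥ 4, then C does not have three pairwise equal coordinates; that is, there do not exist three distinct coordinate positions i₁, i₂, i₃ such that every codeword x ∈ C satisfies x_{i₁} = x_{i₂} = x_{i₃}. -/
open Finset

abbrev Code (n : ℕ) := Submodule (ZMod 2) (Fin n → ZMod 2)

def dotp {n : ℕ} (x y : Fin n → ZMod 2) : ZMod 2 := ∑ i, x i * y i

def dualCode {n : ℕ} (C : Code n) : Code n where
  carrier := {y | ∀ x ∈ C, dotp x y = 0}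
  zero_mem' := by intro x _; simp [dotp]
  add_mem' := by
    intro y z hy hz x hx
    have h1 := hy x hx
    have h2 := hz x hx
    simp only [dotp, Set.mem_setOf_eq] at *
    simp [Pi.add_apply, mul_add, Finset.sum_add_distrib, h1, h2]
  smul_mem' := by
    intro c y hy x hx
    have h1 := hy x hx
    simp only [dotp, Set.mem_setOf_eq] at *
    simp [Pi.smul_apply, smul_eq_mul, mul_left_comm, ← Finset.mul_sum, h1]

def IsSelfDual {n : ℕ} (C : Code n) : Prop := C = dualCode C

def IsSelfOrthogonal {n : ℕ} (C : Code n) : Prop := C ≤ dualCode C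

def wt {n : ℕ} (x : Fin n → ZMod 2) : ℕ := (Finset.univ.filter (fun i => x i ≠ 0)).card

theorem no_three_equal_coordinates {n : ℕ} (hn : 4 ≤ n) (C : Code n) (h : IsSelfDual C) :
    ¬ ∃ i₁ i₂ i₃ : Fin n, i₁ ≠ i₂ ∧ i₁ ≠ i₃ ∧ i₂ ≠ i₃ ∧
      ∀ x ∈ C, x i₁ = x i₂ ∧ x i₂ = x i₃ := by
  rintro ⟨i₁, i₂, i₃, h12, h13, h23, hall⟩
  set e : Fin n → ZMod 2 := fun j => (if j = i₁ then 1 else 0) + (if j = i₂ then 1 else 0) with he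
  have hmem : e ∈ dualCode C := by
    intro x hx
    have h1 := (hall x hx).1
    simp only [dotp, he, mul_add, mul_ite, mul_one, mul_zero, Finset.sum_add_distrib,
      Finset.sum_ite_eq', Finset.mem_univ, if_true]
    rw [h1]
    ring_nf
    simp [CharTwo.two_eq_zero]
  rw [← h] at hmem
  have := (hall e hmem).2
  simp only [he, if_neg (Ne.symm h12), if_pos rfl, if_neg (Ne.symm h13), if_neg (Ne.symm h23)] at this
  simp at this
end

section
/- Let C be a binary self-dual [n = 2k, k] code with n > 2 whose last two coordinates are not identically equal. Let C₀ = {x ∈ C : x_{n-1} = x_n} and let C₁ be the code obtained from C₀ by deleting the last two coordinates. Then C₁ is a binary self-dual code of length n − 2 (i.e., C₁ = C₁^⊥ and dim C₁ = k − 1). -/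
open Finset

def projSum {n : ℕ} (a b : Fin n) : (Fin n → ZMod 2) →ₗ[ZMod 2] ZMod 2 :=
  (LinearMap.proj a : (Fin n → ZMod 2) →ₗ[ZMod 2] ZMod 2) + LinearMap.proj b

-- auxiliary lemmas

def dotForm (n : ℕ) : LinearMap.BilinForm (ZMod 2) (Fin n → ZMod 2) :=
  LinearMap.mk₂ (ZMod 2) (fun x y => dotp x y)
    (by intro x x' y; simp [dotp, add_mul, Finset.sum_add_distrib])
    (by intro c x y; simp [dotp, Finset.mul_sum, mul_assoc])
    (by intro x y y'; simp [dotp, mul_add, Finset.sum_add_distrib])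
    (by
      intro c x y
      simp only [dotp, smul_eq_mul, Pi.smul_apply, Finset.mul_sum]
      exact Finset.sum_congr rfl (fun i _ => by ring))

lemma dotForm_apply {n : ℕ} (x y : Fin n → ZMod 2) : dotForm n x y = dotp x y := rfl

lemma dotForm_refl {n : ℕ} : (dotForm n).IsRefl := by
  intro x y hxy
  simpa [dotForm_apply, dotp, mul_comm] using hxy

lemma dotForm_nondeg {n : ℕ} : (dotForm n).Nondegenerate := by
  refine ⟨fun x hx => ?_, fun x hx => ?_⟩
  · funext i
    have := hx (Pi.single i 1)
    simpa [dotForm_apply, dotp, Pi.single_apply, mul_ite] using this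
  · funext i
    have := hx (Pi.single i 1)
    simpa [dotForm_apply, dotp, Pi.single_apply, ite_mul] using this

lemma dualCode_eq_orthogonal {n : ℕ} (D : Code n) :
    dualCode D = (dotForm n).orthogonal D := by
  ext y
  simp only [dualCode, Submodule.mem_mk, AddSubmonoid.mem_mk, AddSubsemigroup.mem_mk,
    Set.mem_setOf_eq, LinearMap.BilinForm.mem_orthogonal_iff]
  rfl

lemma finrank_dualCode {n : ℕ} (D : Code n) :
    Module.finrank (ZMod 2) (dualCode D) = n - Module.finrank (ZMod 2) D := by
  rw [dualCode_eq_orthogonal, LinearMap.BilinForm.finrank_orthogonal dotForm_nondeg]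
  simp

lemma sum_split {k : ℕ} (hk : 2 ≤ k) (a b : Fin (2*k)) (ha : (a : ℕ) = 2*k-2)
    (hb : (b : ℕ) = 2*k-1) (g : Fin (2*k) → ZMod 2) :
    ∑ i, g i = (∑ i : Fin (2*k-2), g (Fin.castLE (Nat.sub_le _ _) i)) + g a + g b := by
  have hn : 2*k-2 + 1 + 1 = 2*k := by omega
  rw [← Fin.sum_congr' g hn, Fin.sum_univ_castSucc, Fin.sum_univ_castSucc]
  have e1 : ∀ i : Fin (2*k-2), g (Fin.cast hn i.castSucc.castSucc) =
      g (Fin.castLE (show 2*k-2 ≤ 2*k by omega) i) :=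
    fun i => congrArg g (Fin.ext (by simp))
  have e2 : g (Fin.cast hn (Fin.last (2*k-2)).castSucc) = g a :=
    congrArg g (Fin.ext (by simp only [Fin.coe_cast, Fin.coe_castSucc, Fin.val_last, ha]))
  have e3 : g (Fin.cast hn (Fin.last (2*k-2+1))) = g b :=
    congrArg g (Fin.ext (by simp only [Fin.coe_cast, Fin.val_last, hb]; omega))
  simp only [e1, e2, e3]

theorem punctured_code_selfdual {k : ℕ} (hk : 2 ≤ k) (C : Code (2*k)) (h : IsSelfDual C)
    (a b : Fin (2*k)) (ha : (a : ℕ) = 2*k-2) (hb : (b : ℕ) = 2*k-1)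
    (hne : ∃ y ∈ C, y a ≠ y b) :
    IsSelfDual (Submodule.map
        (LinearMap.funLeft (ZMod 2) (ZMod 2) (Fin.castLE (show 2*k-2 ≤ 2*k by omega)))
        (C ⊓ LinearMap.ker (projSum a b))) ∧
    Module.finrank (ZMod 2)
      ↥(Submodule.map
        (LinearMap.funLeft (ZMod 2) (ZMod 2) (Fin.castLE (show 2*k-2 ≤ 2*k by omega)))
        (C ⊓ LinearMap.ker (projSum a b))) = k - 1 := by
  obtain ⟨y, hy, hyne⟩ := hne
  set f := LinearMap.funLeft (ZMod 2) (ZMod 2) (Fin.castLE (show 2*k-2 ≤ 2*k by omega)) with hf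
  set C₀ : Code (2*k) := C ⊓ LinearMap.ker (projSum a b) with hC₀
  set C₁ : Code (2*k-2) := Submodule.map f C₀ with hC₁
  -- dim C = k
  have hfrV : Module.finrank (ZMod 2) (Fin (2*k) → ZMod 2) = 2*k := by simp
  have hCle : Module.finrank (ZMod 2) C ≤ 2*k := by
    have := Submodule.finrank_le C
    rwa [hfrV] at this
  have hdimC : Module.finrank (ZMod 2) C = k := by
    have h1 := finrank_dualCode C
    rw [← h] at h1
    omega
  -- y a + y b = 1
  have hy1 : y a + y b = 1 := by
    revert hyne; generalize y a = u; generalize y b = v; revert u v; decide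
  -- dim C₀ = k - 1
  have hdimC₀ : Module.finrank (ZMod 2) C₀ = k - 1 := by
    set g := (projSum a b).domRestrict C with hg
    have hkg : LinearMap.ker g = Submodule.comap C.subtype (LinearMap.ker (projSum a b)) := by
      ext z; simp [hg, LinearMap.mem_ker]
    have hmap : Submodule.map C.subtype (LinearMap.ker g) = C₀ := by
      rw [hkg, Submodule.map_comap_subtype]
    have hrg : LinearMap.range g = ⊤ := by
      rw [Submodule.eq_top_iff']
      intro c
      refine ⟨c • ⟨y, hy⟩, ?_⟩
      simp only [hg, LinearMap.domRestrict_apply, SetLike.val_smul, map_smul, smul_eq_mul]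
      rw [show projSum a b y = y a + y b from rfl, hy1, mul_one]
    have hrk := LinearMap.finrank_range_add_finrank_ker g
    rw [hrg] at hrk
    have h1 : Module.finrank (ZMod 2) (⊤ : Submodule (ZMod 2) (ZMod 2)) = 1 := by simp
    rw [h1, hdimC] at hrk
    rw [← hmap, Submodule.finrank_map_subtype_eq]
    omega
  -- support lemma: x ∈ ker f, x ∈ C₀ ⇒ x supported on {a,b} with x a = x b
  have hinj : ∀ x ∈ C₀, f x = 0 → x = 0 := by
    intro x hx hfx
    obtain ⟨hxC, hxk⟩ := hx
    have hab : x a + x b = 0 := hxk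
    have hxab : x b = x a := by
      revert hab; generalize x a = u; generalize x b = v; revert u v; decide
    have hsupp : ∀ i : Fin (2*k), i ≠ a → i ≠ b → x i = 0 := by
      intro i hia hib
      have hi : (i : ℕ) < 2*k-2 := by
        have h1 : (i : ℕ) < 2*k := i.isLt
        have h2 : (i : ℕ) ≠ 2*k-2 := fun hh => hia (Fin.ext (by omega))
        have h3 : (i : ℕ) ≠ 2*k-1 := fun hh => hib (Fin.ext (by omega))
        omega
      have := congrFun hfx ⟨(i : ℕ), hi⟩
      simpa [hf, LinearMap.funLeft, Fin.castLE, Fin.ext_iff] using this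
    by_cases hxa : x a = 0
    · funext i
      by_cases hia : i = a
      · simp [hia, hxa]
      by_cases hib : i = b
      · simp [hib, hxab, hxa]
      · simp [hsupp i hia hib]
    · exfalso
      have hx1 : x a = 1 := by revert hxa; generalize x a = u; revert u; decide
      -- x ∈ C, so dotp y x = 0 by self-duality
      have hxd : ∀ z ∈ C, dotp z x = 0 := by
        have : x ∈ dualCode C := h ▸ hxC
        exact this
      have h0 := hxd y hy
      rw [dotp, sum_split hk a b ha hb (fun i => y i * x i)] at h0
      have hzero : (∑ i : Fin (2*k-2), y (Fin.castLE (by omega) i) * x (Fin.castLE (by omega) i)) = 0 := by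
        apply Finset.sum_eq_zero
        intro i _
        have hia : Fin.castLE (show 2*k-2 ≤ 2*k by omega) i ≠ a := by
          intro hh; have := congrArg Fin.val hh; simp [ha] at this; omega
        have hib : Fin.castLE (show 2*k-2 ≤ 2*k by omega) i ≠ b := by
          intro hh; have := congrArg Fin.val hh; simp [hb] at this; omega
        rw [hsupp _ hia hib, mul_zero]
      have h0' : (∑ i : Fin (2*k-2),
          y (Fin.castLE (show 2*k-2 ≤ 2*k by omega) i) * x (Fin.castLE (show 2*k-2 ≤ 2*k by omega) i))
          + y a * x a + y b * x b = 0 := h0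
      rw [hzero, hxab, hx1, mul_one, mul_one, zero_add, hy1] at h0'
      exact one_ne_zero h0'
  -- dim C₁ = k - 1
  have hdimC₁ : Module.finrank (ZMod 2) C₁ = k - 1 := by
    set g := f.domRestrict C₀ with hg
    have hrg : LinearMap.range g = C₁ := by
      rw [hC₁]; exact LinearMap.range_domRestrict C₀ f
    have hkg : LinearMap.ker g = ⊥ := by
      rw [LinearMap.ker_eq_bot']
      intro ⟨z, hz⟩ hgz
      have : z = 0 := hinj z hz (by simpa [hg] using hgz)
      simpa using this
    have hrk := LinearMap.finrank_range_add_finrank_ker g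
    rw [hrg, hkg] at hrk
    simp only [finrank_bot, add_zero] at hrk
    rw [hrk, hdimC₀]
  refine ⟨?_, hdimC₁⟩
  -- self-orthogonality
  have hso : C₁ ≤ dualCode C₁ := by
    rintro v ⟨x2, hx2, rfl⟩
    rintro u ⟨x1, hx1, rfl⟩
    obtain ⟨hx1C, hx1k⟩ := hx1
    obtain ⟨hx2C, hx2k⟩ := hx2
    have h1ab : x1 b = x1 a := by
      have : x1 a + x1 b = 0 := hx1k
      revert this; generalize x1 a = u; generalize x1 b = v; revert u v; decide
    have h2ab : x2 b = x2 a := by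
      have : x2 a + x2 b = 0 := hx2k
      revert this; generalize x2 a = u; generalize x2 b = v; revert u v; decide
    have hfull : dotp x1 x2 = 0 := by
      have : x2 ∈ dualCode C := h ▸ hx2C
      exact this x1 hx1C
    rw [dotp, sum_split hk a b ha hb (fun i => x1 i * x2 i)] at hfull
    have hlast : x1 a * x2 a + x1 b * x2 b = 0 := by
      rw [h1ab, h2ab]
      generalize x1 a * x2 a = u; revert u; decide
    have : dotp (f x1) (f x2) = ∑ i : Fin (2*k-2),
        x1 (Fin.castLE (by omega) i) * x2 (Fin.castLE (by omega) i) := rfl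
    rw [this]
    have hfull' : (∑ i : Fin (2*k-2),
        x1 (Fin.castLE (show 2*k-2 ≤ 2*k by omega) i) * x2 (Fin.castLE (show 2*k-2 ≤ 2*k by omega) i))
        + x1 a * x2 a + x1 b * x2 b = 0 := hfull
    rw [add_assoc, hlast, add_zero] at hfull'
    exact hfull'
  -- equality via dimension
  have hdual : Module.finrank (ZMod 2) (dualCode C₁) = k - 1 := by
    rw [finrank_dualCode, hdimC₁]
    omega
  exact Submodule.eq_of_le_of_finrank_le hso (by rw [hdual, hdimC₁])
end

section
/- Let C₁ be a binary self-dual [2k−2, k−1] code with generator matrix G₁, and let f : Aut(C₁) → GL(k−1, 2) be the homomorphism with G₁P = f(P)G₁. For vectors a, b ∈ 𝔽₂^{k−1}, if aᵀ = f(P)bᵀ for some P ∈ Aut(C₁), then the codes generated by the matrices (G₁ | aᵀ | aᵀ) and (G₁ | bᵀ | bᵀ) are equivalent (via a permutation of the 2k coordinates). -/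
open Finset

def colPerm {r m : ℕ} (σ : Equiv.Perm (Fin m)) (G : Matrix (Fin r) (Fin m) (ZMod 2)) :
    Matrix (Fin r) (Fin m) (ZMod 2) := fun i j => G i (σ j)

def PreservesCode {n : ℕ} (σ : Equiv.Perm (Fin n)) (C : Code n) : Prop :=
  Submodule.map (LinearMap.funLeft (ZMod 2) (ZMod 2) σ) C = C

def extRow {r m : ℕ} (G : Matrix (Fin r) (Fin m) (ZMod 2)) (a : Fin r → ZMod 2)
    (i : Fin r) : Fin (m+2) → ZMod 2 :=
  fun j => if h : (j : ℕ) < m then G i ⟨j, h⟩ else a i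

def extCode {r m : ℕ} (G : Matrix (Fin r) (Fin m) (ZMod 2)) (a : Fin r → ZMod 2) :
    Code (m+2) := Submodule.span (ZMod 2) (Set.range (extRow G a))

def permExt {m : ℕ} (σ : Equiv.Perm (Fin m)) : Equiv.Perm (Fin (m+2)) :=
  finSumFinEquiv.symm.trans ((Equiv.sumCongr σ (Equiv.refl (Fin 2))).trans finSumFinEquiv)

lemma permExt_castAdd {m : ℕ} (σ : Equiv.Perm (Fin m)) (i : Fin m) :
    permExt σ (Fin.castAdd 2 i) = Fin.castAdd 2 (σ i) := by
  simp [permExt]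

lemma permExt_natAdd {m : ℕ} (σ : Equiv.Perm (Fin m)) (i : Fin 2) :
    permExt σ (Fin.natAdd m i) = Fin.natAdd m i := by
  simp [permExt]

lemma extRow_castAdd {r m : ℕ} (G : Matrix (Fin r) (Fin m) (ZMod 2)) (a : Fin r → ZMod 2)
    (i : Fin r) (j : Fin m) : extRow G a i (Fin.castAdd 2 j) = G i j := by
  simp only [extRow, Fin.coe_castAdd]
  rw [dif_pos j.is_lt]

lemma extRow_natAdd {r m : ℕ} (G : Matrix (Fin r) (Fin m) (ZMod 2)) (a : Fin r → ZMod 2)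
    (i : Fin r) (j : Fin 2) : extRow G a i (Fin.natAdd m j) = a i := by
  simp only [extRow, Fin.coe_natAdd]
  rw [dif_neg (by omega)]

lemma ext_key {r m : ℕ} (G : Matrix (Fin r) (Fin m) (ZMod 2)) (a b : Fin r → ZMod 2)
    (σ : Equiv.Perm (Fin m)) (M : Matrix (Fin r) (Fin r) (ZMod 2))
    (hG : colPerm σ G = M * G) (hab : a = M.mulVec b) (i : Fin r) :
    LinearMap.funLeft (ZMod 2) (ZMod 2) (permExt σ) (extRow G a i)
      = ∑ l, M i l • extRow G b l := by
  funext j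
  simp only [LinearMap.funLeft_apply, Finset.sum_apply, Pi.smul_apply, smul_eq_mul]
  induction j using Fin.addCases with
  | left j =>
      rw [permExt_castAdd, extRow_castAdd]
      have h := congrFun (congrFun hG i) j
      simp only [colPerm, Matrix.mul_apply] at h
      rw [h]
      exact Finset.sum_congr rfl fun l _ => by rw [extRow_castAdd]
  | right j =>
      rw [permExt_natAdd, extRow_natAdd, hab]
      simp only [Matrix.mulVec, dotProduct]
      exact Finset.sum_congr rfl fun l _ => by rw [extRow_natAdd]

theorem orbit_gives_equivalent_extensions {k : ℕ} (hk : 2 ≤ k)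
    (C₁ : Code (2*k-2)) (h1 : IsSelfDual C₁)
    (G₁ : Matrix (Fin (k-1)) (Fin (2*k-2)) (ZMod 2))
    (hindep : LinearIndependent (ZMod 2) (fun i => G₁ i))
    (hspan : Submodule.span (ZMod 2) (Set.range (fun i => G₁ i)) = C₁)
    (f : Equiv.Perm (Fin (2*k-2)) → Matrix (Fin (k-1)) (Fin (k-1)) (ZMod 2))
    (hf : ∀ σ, PreservesCode σ C₁ → colPerm σ G₁ = f σ * G₁)
    (a b : Fin (k-1) → ZMod 2)
    (σ : Equiv.Perm (Fin (2*k-2))) (hσ : PreservesCode σ C₁)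
    (hab : a = (f σ).mulVec b) :
    ∃ π : Equiv.Perm (Fin (2*k-2+2)),
      Submodule.map (LinearMap.funLeft (ZMod 2) (ZMod 2) π) (extCode G₁ a)
        = extCode G₁ b := by
  set M := f σ with hMdef
  have hG := hf σ hσ
  -- rows of the column-permuted matrix are linearly independent
  have hindep' : LinearIndependent (ZMod 2) (fun i => colPerm σ G₁ i) := by
    have h := hindep.map' (LinearEquiv.funCongrLeft (ZMod 2) (ZMod 2) σ).toLinearMap
      (LinearEquiv.funCongrLeft (ZMod 2) (ZMod 2) σ).ker
    convert h using 1 <;> exact rfl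
  -- M is invertible
  have hMrows : LinearIndependent (ZMod 2) (fun i => M i) := by
    rw [Fintype.linearIndependent_iff]
    intro g hg
    have h0 : ∑ i, g i • (M * G₁) i = 0 := by
      funext jj
      simp only [Finset.sum_apply, Pi.smul_apply, Pi.zero_apply, smul_eq_mul,
        Matrix.mul_apply, Finset.mul_sum]
      rw [Finset.sum_comm]
      refine Finset.sum_eq_zero fun l _ => ?_
      have hgl : ∑ i, g i * M i l = 0 := by simpa using congrFun hg l
      calc ∑ i, g i * (M i l * G₁ l jj) = (∑ i, g i * M i l) * G₁ l jj := by
            rw [Finset.sum_mul]; exact Finset.sum_congr rfl fun i _ => (mul_assoc _ _ _).symm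
        _ = 0 := by rw [hgl, zero_mul]
    rw [← hG] at h0
    exact Fintype.linearIndependent_iff.mp hindep' g h0
  have hMunit : IsUnit M := Matrix.linearIndependent_rows_iff_isUnit.mp hMrows
  set N := M⁻¹ with hNdef
  have hNM : N * M = 1 := Matrix.nonsing_inv_mul M ((Matrix.isUnit_iff_isUnit_det M).mp hMunit)
  set π := permExt σ with hπdef
  have key := ext_key G₁ a b σ M hG hab
  have key2 : ∀ i, extRow G₁ b i
      = ∑ l, N i l • (LinearMap.funLeft (ZMod 2) (ZMod 2) π) (extRow G₁ a l) := by
    intro i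
    have h1 : ∑ l, N i l • (LinearMap.funLeft (ZMod 2) (ZMod 2) π) (extRow G₁ a l)
        = ∑ l, N i l • ∑ t, M l t • extRow G₁ b t :=
      Finset.sum_congr rfl fun l _ => by rw [key l]
    rw [h1]
    funext j
    simp only [Finset.sum_apply, Pi.smul_apply, smul_eq_mul, Finset.mul_sum]
    rw [Finset.sum_comm]
    have h2 : ∀ t, ∑ l, N i l * (M l t * extRow G₁ b t j)
        = (N * M) i t * extRow G₁ b t j := by
      intro t
      rw [Matrix.mul_apply, Finset.sum_mul]
      exact Finset.sum_congr rfl fun l _ => (mul_assoc _ _ _).symm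
    rw [Finset.sum_congr rfl fun t _ => h2 t]
    simp [hNM, Matrix.one_apply, ite_mul]
  refine ⟨π, ?_⟩
  rw [extCode, extCode, Submodule.map_span, ← Set.range_comp]
  apply le_antisymm
  · rw [Submodule.span_le]
    rintro x ⟨i, rfl⟩
    have : (LinearMap.funLeft (ZMod 2) (ZMod 2) π ∘ extRow G₁ a) i
        = ∑ l, M i l • extRow G₁ b l := key i
    rw [this]
    exact Submodule.sum_mem _ fun l _ =>
      Submodule.smul_mem _ _ (Submodule.subset_span ⟨l, rfl⟩)
  · rw [Submodule.span_le]
    rintro x ⟨i, rfl⟩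
    rw [key2 i]
    exact Submodule.sum_mem _ fun l _ =>
      Submodule.smul_mem _ _ (Submodule.subset_span ⟨l, rfl⟩)
end

section
/- Let C₁ be a binary self-dual [2k−2, k−1] code with generator matrix G₁ and let f : Aut(C₁) → GL(k−1, 2) be defined by G₁P = f(P)G₁. If the codes generated by (G₁ | aᵀ | aᵀ) and (G₁ | bᵀ | bᵀ) are equivalent, then a and b lie in the same orbit of the action of Im(f) on 𝔽₂^{k−1} given by A · x = (Axᵀ)ᵀ. -/
open Finset

namespace OrbitAux

variable {r n : ℕ}

def embd (j : Fin n) : Fin (n+2) := ⟨(j : ℕ), by omega⟩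

def ix0 (n : ℕ) : Fin (n+2) := ⟨n, by omega⟩

def ix1 (n : ℕ) : Fin (n+2) := ⟨n+1, by omega⟩

@[simp] lemma embd_val (j : Fin n) : ((embd j : Fin (n+2)) : ℕ) = (j : ℕ) := rfl
@[simp] lemma ix0_val : ((ix0 n : Fin (n+2)) : ℕ) = n := rfl
@[simp] lemma ix1_val : ((ix1 n : Fin (n+2)) : ℕ) = n + 1 := rfl

lemma z2 : ∀ x : ZMod 2, x + x = 0 := by decide

lemma extRow_embd (G : Matrix (Fin r) (Fin n) (ZMod 2)) (a : Fin r → ZMod 2)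
    (i : Fin r) (j : Fin n) : extRow G a i (embd j) = G i j := by
  simp [extRow, embd]

lemma extRow_high (G : Matrix (Fin r) (Fin n) (ZMod 2)) (a : Fin r → ZMod 2)
    (i : Fin r) {t : Fin (n+2)} (ht : ¬ ((t : ℕ) < n)) : extRow G a i t = a i := by
  simp [extRow, ht]

lemma high_cases {x : Fin (n+2)} (hx : ¬ ((x : ℕ) < n)) : x = ix0 n ∨ x = ix1 n := by
  have h3 := x.isLt
  have : (x : ℕ) = n ∨ (x : ℕ) = n + 1 := by omega
  rcases this with h | h
  · exact Or.inl (Fin.ext h)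
  · exact Or.inr (Fin.ext h)

lemma pairmem (y z : Fin (n+2)) (hy : ¬ ((y : ℕ) < n)) (hz : ¬ ((z : ℕ) < n)) (hyz : y ≠ z)
    {x : Fin (n+2)} (hx : ¬ ((x : ℕ) < n)) : x = y ∨ x = z := by
  have h1 := y.isLt; have h2 := z.isLt; have h3 := x.isLt
  have hvne : (y : ℕ) ≠ (z : ℕ) := fun h => hyz (Fin.ext h)
  have : (x : ℕ) = (y : ℕ) ∨ (x : ℕ) = (z : ℕ) := by omega
  exact this.imp Fin.ext Fin.ext

lemma mem_span_fun_iff {N : ℕ} (v : Fin r → (Fin N → ZMod 2)) (x : Fin N → ZMod 2) :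
    x ∈ Submodule.span (ZMod 2) (Set.range v) ↔
      ∃ c : Fin r → ZMod 2, ∀ j, x j = ∑ l, c l * v l j := by
  rw [Submodule.mem_span_range_iff_exists_fun]
  constructor
  · rintro ⟨c, rfl⟩
    exact ⟨c, fun j => by simp [Finset.sum_apply]⟩
  · rintro ⟨c, hc⟩
    refine ⟨c, funext fun j => ?_⟩
    rw [hc j]
    simp [Finset.sum_apply]

lemma mem_extCode_iff (G : Matrix (Fin r) (Fin n) (ZMod 2)) (a : Fin r → ZMod 2)
    (x : Fin (n+2) → ZMod 2) :
    x ∈ extCode G a ↔ ∃ c : Fin r → ZMod 2, ∀ j, x j = ∑ l, c l * extRow G a l j :=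
  mem_span_fun_iff _ _

lemma code_high_eq {G : Matrix (Fin r) (Fin n) (ZMod 2)} {a : Fin r → ZMod 2}
    {x : Fin (n+2) → ZMod 2} (hx : x ∈ extCode G a) {t t' : Fin (n+2)}
    (ht : ¬ ((t : ℕ) < n)) (ht' : ¬ ((t' : ℕ) < n)) : x t = x t' := by
  obtain ⟨c, hc⟩ := (mem_extCode_iff G a x).1 hx
  rw [hc t, hc t']
  exact Finset.sum_congr rfl fun l _ => by rw [extRow_high _ _ _ ht, extRow_high _ _ _ ht']

lemma embd_inj {j j' : Fin n} (h : embd j = embd j') : j = j' := by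
  have h3 := congrArg Fin.val h
  exact Fin.ext h3

lemma restrictPerm (τ : Equiv.Perm (Fin (n+2))) (h : ∀ j : Fin n, ((τ (embd j)) : ℕ) < n) :
    ∃ σ : Equiv.Perm (Fin n), ∀ j, embd (σ j) = τ (embd j) := by
  have hinj : Function.Injective (fun j : Fin n => (⟨((τ (embd j)) : ℕ), h j⟩ : Fin n)) := by
    intro x y hxy
    simp only [Fin.mk.injEq] at hxy
    have h2 : embd x = embd y := τ.injective (Fin.ext hxy)
    have h3 := congrArg Fin.val h2
    exact Fin.ext h3
  refine ⟨Equiv.ofBijective _ ⟨hinj, Finite.injective_iff_surjective.mp hinj⟩,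
    fun j => Fin.ext ?_⟩
  rfl


lemma epilogue (C : Code n) (G : Matrix (Fin r) (Fin n) (ZMod 2))
    (hindep : LinearIndependent (ZMod 2) (fun i => G i))
    (hspan : Submodule.span (ZMod 2) (Set.range (fun i => G i)) = C)
    (f : Equiv.Perm (Fin n) → Matrix (Fin r) (Fin r) (ZMod 2))
    (hf : ∀ σ, PreservesCode σ C → colPerm σ G = f σ * G)
    (a b : Fin r → ZMod 2) (σ : Equiv.Perm (Fin n)) (A : Matrix (Fin r) (Fin r) (ZMod 2))
    (hcol : ∀ i j, G i (σ j) = ∑ l, A i l * G l j)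
    (hab : ∀ i, a i = ∑ l, A i l * b l) :
    PreservesCode σ C ∧ a = (f σ).mulVec b := by
  have memC : ∀ x, x ∈ C ↔ ∃ c : Fin r → ZMod 2, ∀ j, x j = ∑ l, c l * G l j := by
    intro x; rw [← hspan]; exact mem_span_fun_iff _ _
  have hle : Submodule.map (LinearMap.funLeft (ZMod 2) (ZMod 2) σ) C ≤ C := by
    intro y hy
    obtain ⟨x, hx, rfl⟩ := Submodule.mem_map.1 hy
    obtain ⟨c, hc⟩ := (memC x).1 hx
    refine (memC _).2 ⟨fun t => ∑ l, c l * A l t, fun j => ?_⟩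
    calc (LinearMap.funLeft (ZMod 2) (ZMod 2) (⇑σ) x) j = x (σ j) := rfl
      _ = ∑ l, c l * G l (σ j) := hc (σ j)
      _ = ∑ l, c l * ∑ t, A l t * G t j :=
          Finset.sum_congr rfl fun l _ => by rw [hcol l j]
      _ = ∑ t, (∑ l, c l * A l t) * G t j := by
          simp only [Finset.mul_sum, Finset.sum_mul]
          rw [Finset.sum_comm]
          exact Finset.sum_congr rfl fun t _ => Finset.sum_congr rfl fun l _ => by ring
  have hpres : PreservesCode σ C := by
    show Submodule.map (LinearMap.funLeft (ZMod 2) (ZMod 2) σ) C = C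
    refine Submodule.eq_of_le_of_finrank_le hle (le_of_eq ?_)
    exact (LinearEquiv.finrank_map_eq (LinearEquiv.funCongrLeft (ZMod 2) (ZMod 2) σ) C).symm
  have hAG : A * G = f σ * G := by
    have h2 := hf σ hpres
    have h3 : colPerm σ G = A * G := by
      ext i j
      rw [Matrix.mul_apply]
      exact hcol i j
    rw [← h3, h2]
  have hfA : ∀ i t, f σ i t = A i t := by
    intro i t
    have hrow : (∑ l, (f σ i l - A i l) • (fun i => G i) l) = 0 := by
      funext j
      simp only [Finset.sum_apply, Pi.smul_apply, smul_eq_mul, Pi.zero_apply]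
      have hij := congrFun (congrFun hAG i) j
      rw [Matrix.mul_apply, Matrix.mul_apply] at hij
      calc ∑ l, (f σ i l - A i l) * G l j
          = (∑ l, f σ i l * G l j) - ∑ l, A i l * G l j := by
            rw [← Finset.sum_sub_distrib]
            exact Finset.sum_congr rfl fun l _ => by ring
        _ = 0 := by rw [← hij]; exact sub_self _
    have := Fintype.linearIndependent_iff.1 hindep _ hrow t
    exact (sub_eq_zero.mp this)
  refine ⟨hpres, funext fun i => ?_⟩
  rw [hab i]
  have : (f σ).mulVec b i = ∑ l, f σ i l * b l := rfl
  rw [this]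
  exact Finset.sum_congr rfl fun l _ => by rw [hfA i l]

lemma key (C : Code n) (h1 : C = dualCode C)
    (G : Matrix (Fin r) (Fin n) (ZMod 2))
    (hindep : LinearIndependent (ZMod 2) (fun i => G i))
    (hspan : Submodule.span (ZMod 2) (Set.range (fun i => G i)) = C)
    (f : Equiv.Perm (Fin n) → Matrix (Fin r) (Fin r) (ZMod 2))
    (hf : ∀ σ, PreservesCode σ C → colPerm σ G = f σ * G)
    (a b : Fin r → ZMod 2)
    (hequiv : ∃ π : Equiv.Perm (Fin (n+2)),
      Submodule.map (LinearMap.funLeft (ZMod 2) (ZMod 2) π) (extCode G a)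
        = extCode G b) :
    ∃ σ : Equiv.Perm (Fin n), PreservesCode σ C ∧ a = (f σ).mulVec b := by
  obtain ⟨π, hπ⟩ := hequiv
  have memC : ∀ x, x ∈ C ↔ ∃ c : Fin r → ZMod 2, ∀ j, x j = ∑ l, c l * G l j := by
    intro x; rw [← hspan]; exact mem_span_fun_iff _ _
  -- each permuted row of the a-extension lies in the b-extension code
  have hrowmem : ∀ i, (fun j => extRow G a i (π j)) ∈ extCode G b := by
    intro i
    rw [← hπ]
    exact Submodule.mem_map.2 ⟨extRow G a i, Submodule.subset_span ⟨i, rfl⟩, rfl⟩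
  choose A hA0 using fun i => (mem_extCode_iff G b _).1 (hrowmem i)
  have hA : ∀ i j, extRow G a i (π j) = ∑ l, A i l * extRow G b l j := fun i j => hA0 i j
  have hDbelem : ∀ y ∈ extCode G b, ∃ x ∈ extCode G a, ∀ u, y u = x (π u) := by
    intro y hy
    rw [← hπ] at hy
    obtain ⟨x, hx, rfl⟩ := Submodule.mem_map.1 hy
    exact ⟨x, hx, fun u => rfl⟩
  by_cases hboth : ((π (ix0 n)) : ℕ) < n ∧ ((π (ix1 n)) : ℕ) < n
  · -- hard case : both extension columns are sent into the first n coordinates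
    obtain ⟨hem, hem1⟩ := hboth
    have hix0h : ¬ (((ix0 n : Fin (n+2))) : ℕ) < n := by simp
    have hix1h : ¬ (((ix1 n : Fin (n+2))) : ℕ) < n := by simp
    have hplow : ((π⁻¹ (ix0 n)) : ℕ) < n := by
      by_contra hh
      rcases high_cases hh with h | h
      · have h2 : π (π⁻¹ (ix0 n)) = ix0 n := π.apply_symm_apply _
        rw [h] at h2
        rw [h2] at hem
        simp at hem
      · have h2 : π (π⁻¹ (ix0 n)) = ix0 n := π.apply_symm_apply _
        rw [h] at h2
        rw [h2] at hem1
        simp at hem1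
    have hqlow : ((π⁻¹ (ix1 n)) : ℕ) < n := by
      by_contra hh
      rcases high_cases hh with h | h
      · have h2 : π (π⁻¹ (ix1 n)) = ix1 n := π.apply_symm_apply _
        rw [h] at h2
        rw [h2] at hem
        simp at hem
      · have h2 : π (π⁻¹ (ix1 n)) = ix1 n := π.apply_symm_apply _
        rw [h] at h2
        rw [h2] at hem1
        simp at hem1
    set p : Fin n := ⟨((π⁻¹ (ix0 n)) : ℕ), hplow⟩ with hpdef
    set q : Fin n := ⟨((π⁻¹ (ix1 n)) : ℕ), hqlow⟩ with hqdef
    have hembp : embd p = π⁻¹ (ix0 n) := Fin.ext rfl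
    have hembq : embd q = π⁻¹ (ix1 n) := Fin.ext rfl
    have hp0 : π (embd p) = ix0 n := by rw [hembp]; exact π.apply_symm_apply _
    have hq1 : π (embd q) = ix1 n := by rw [hembq]; exact π.apply_symm_apply _
    have hpq : p ≠ q := by
      intro h
      have h2 : π (embd p) = π (embd q) := by rw [h]
      rw [hp0, hq1] at h2
      have := congrArg Fin.val h2
      simp at this
    set i0 : Fin n := ⟨((π (ix0 n)) : ℕ), hem⟩ with hi0def
    set i1 : Fin n := ⟨((π (ix1 n)) : ℕ), hem1⟩ with hi1def
    have hembi0 : embd i0 = π (ix0 n) := Fin.ext rfl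
    have hembi1 : embd i1 = π (ix1 n) := Fin.ext rfl
    have hAix0 : ∀ i, G i i0 = ∑ l, A i l * b l := by
      intro i
      have h2 := hA i (ix0 n)
      rw [← hembi0, extRow_embd] at h2
      rw [h2]
      exact Finset.sum_congr rfl fun l _ => by rw [extRow_high _ _ _ hix0h]
    have hAix1 : ∀ i, G i i1 = ∑ l, A i l * b l := by
      intro i
      have h2 := hA i (ix1 n)
      rw [← hembi1, extRow_embd] at h2
      rw [h2]
      exact Finset.sum_congr rfl fun l _ => by rw [extRow_high _ _ _ hix1h]
    have hAp : ∀ i, a i = ∑ l, A i l * G l p := by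
      intro i
      have h2 := hA i (embd p)
      rw [hp0, extRow_high _ _ _ hix0h] at h2
      rw [h2]
      exact Finset.sum_congr rfl fun l _ => by rw [extRow_embd]
    have hGpq : ∀ l, G l p = G l q := by
      intro l
      obtain ⟨x, hxDa, hxy⟩ := hDbelem (extRow G b l) (Submodule.subset_span ⟨l, rfl⟩)
      have e1 : G l p = x (π (embd p)) := by
        rw [← extRow_embd G b l p]; exact hxy (embd p)
      have e2 : G l q = x (π (embd q)) := by
        rw [← extRow_embd G b l q]; exact hxy (embd q)
      rw [e1, e2, hp0, hq1]
      exact code_high_eq hxDa hix0h hix1h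
    -- the vector with 1's exactly at p and q lies in C (self-duality)
    have hepqC : (fun j => if j = p then (1 : ZMod 2) else if j = q then 1 else 0) ∈ C := by
      rw [h1]
      have hmem : ∀ y : Fin n → ZMod 2, y ∈ dualCode C ↔ ∀ x ∈ C, dotp x y = 0 :=
        fun y => Iff.rfl
      rw [hmem]
      intro x hx
      have hxpq : x p = x q := by
        obtain ⟨c, hc⟩ := (memC x).1 hx
        rw [hc p, hc q]
        exact Finset.sum_congr rfl fun l _ => by rw [hGpq l]
      have hsum : ∀ j, x j * (if j = p then (1 : ZMod 2) else if j = q then 1 else 0)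
          = (if j = p then x p else 0) + (if j = q then x q else 0) := by
        intro j
        by_cases hjp : j = p
        · subst hjp
          rw [if_pos rfl, if_pos rfl, if_neg (fun h => hpq h)]
          ring
        · by_cases hjq : j = q
          · subst hjq
            rw [if_neg hjp, if_pos rfl, if_neg hjp, if_pos rfl]
            ring
          · rw [if_neg hjp, if_neg hjq, if_neg hjp, if_neg hjq]
            ring
      calc dotp x (fun j => if j = p then (1 : ZMod 2) else if j = q then 1 else 0)
          = ∑ j, ((if j = p then x p else 0) + (if j = q then x q else 0)) := by
            rw [dotp]
            exact Finset.sum_congr rfl fun j _ => hsum j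
        _ = x p + x q := by
            rw [Finset.sum_add_distrib]
            simp [Finset.sum_ite_eq']
        _ = 0 := by rw [hxpq]; exact z2 _
    obtain ⟨d, hd⟩ := (memC _).1 hepqC
    -- the key character computation : d · b = 1
    have hdb : ∑ l, d l * b l = 1 := by
      by_contra hne
      have hd0 : ∑ l, d l * b l = 0 := by
        have hz : ∀ z : ZMod 2, z ≠ 1 → z = 0 := by decide
        exact hz _ hne
      have hyDb : (fun u => ∑ l, d l * extRow G b l u) ∈ extCode G b :=
        (mem_extCode_iff G b _).2 ⟨d, fun u => rfl⟩
      obtain ⟨x, hxDa, hxy⟩ := hDbelem _ hyDb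
      obtain ⟨c, hc⟩ := (mem_extCode_iff G a x).1 hxDa
      have hx0 : ∀ j : Fin n, x (embd j) = 0 := by
        intro j
        have h2 : x (embd j) = ∑ l, d l * extRow G b l (π⁻¹ (embd j)) := by
          have h2' := hxy (π⁻¹ (embd j))
          rw [show π (π⁻¹ (embd j)) = embd j from π.apply_symm_apply _] at h2'
          exact h2'.symm
        by_cases hlo : ((π⁻¹ (embd j)) : ℕ) < n
        · set j2 : Fin n := ⟨((π⁻¹ (embd j)) : ℕ), hlo⟩ with hj2def
          have hj2 : embd j2 = π⁻¹ (embd j) := Fin.ext rfl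
          have h3 : x (embd j) = ∑ l, d l * G l j2 := by
            rw [h2, ← hj2]
            exact Finset.sum_congr rfl fun l _ => by rw [extRow_embd]
          have h4 : j2 ≠ p := by
            intro h
            have h5 : π (embd j2) = embd j := by rw [hj2]; exact π.apply_symm_apply _
            rw [h, hp0] at h5
            have h6 := congrArg Fin.val h5
            simp at h6
            omega
          have h5 : j2 ≠ q := by
            intro h
            have h5 : π (embd j2) = embd j := by rw [hj2]; exact π.apply_symm_apply _
            rw [h, hq1] at h5
            have h6 := congrArg Fin.val h5
            simp at h6
            omega
          rw [h3, ← hd j2, if_neg h4, if_neg h5]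
        · rw [h2]
          calc ∑ l, d l * extRow G b l (π⁻¹ (embd j)) = ∑ l, d l * b l :=
              Finset.sum_congr rfl fun l _ => by rw [extRow_high _ _ _ hlo]
            _ = 0 := hd0
      have hc0 : ∀ l, c l = 0 := by
        apply Fintype.linearIndependent_iff.1 hindep
        funext j
        simp only [Finset.sum_apply, Pi.smul_apply, smul_eq_mul, Pi.zero_apply]
        calc ∑ l, c l * G l j = ∑ l, c l * extRow G a l (embd j) :=
            Finset.sum_congr rfl fun l _ => by rw [extRow_embd]
          _ = x (embd j) := (hc (embd j)).symm
          _ = 0 := hx0 j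
      have hxz : ∀ u, x u = 0 := by
        intro u
        rw [hc u]
        simp [hc0]
      have hyp : (∑ l, d l * extRow G b l (embd p)) = 1 := by
        calc ∑ l, d l * extRow G b l (embd p) = ∑ l, d l * G l p :=
            Finset.sum_congr rfl fun l _ => by rw [extRow_embd]
          _ = (if p = p then (1 : ZMod 2) else if p = q then 1 else 0) := (hd p).symm
          _ = 1 := by rw [if_pos rfl]
      rw [hxy (embd p), hxz] at hyp
      exact (by decide : (0 : ZMod 2) ≠ 1) hyp
    -- the corrected transition matrix
    set K : Fin r → ZMod 2 := fun i => ∑ s, A i s * (b s + G s p) with hKdef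
    set A' : Matrix (Fin r) (Fin r) (ZMod 2) := fun i l => A i l + K i * d l with hA'def
    have hKval : ∀ i, K i = (∑ s, A i s * b s) + a i := by
      intro i
      calc K i = (∑ s, A i s * b s) + ∑ s, A i s * G s p := by
            rw [hKdef]
            simp [mul_add, Finset.sum_add_distrib]
        _ = (∑ s, A i s * b s) + a i := by rw [← hAp i]
    have hc2 : ∀ x y : ZMod 2, x + (x + y) = y := by decide
    have hc3 : ∀ x y : ZMod 2, x + (y + x) = y := by decide
    have hab : ∀ i, a i = ∑ l, A' i l * b l := by
      intro i
      have : ∑ l, A' i l * b l = (∑ l, A i l * b l) + K i * ∑ l, d l * b l := by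
        rw [hA'def]
        simp [add_mul, Finset.sum_add_distrib, Finset.mul_sum, mul_assoc]
      rw [this, hdb, mul_one, hKval i, hc2]
    -- building the permutation
    set τ : Equiv.Perm (Fin (n+2)) :=
      π * Equiv.swap (embd p) (ix0 n) * Equiv.swap (embd q) (ix1 n) with hτdef
    have hne_embd_ix0 : ∀ j : Fin n, embd j ≠ ix0 n := by
      intro j h
      have := congrArg Fin.val h
      simp at this
      omega
    have hne_embd_ix1 : ∀ j : Fin n, embd j ≠ ix1 n := by
      intro j h
      have := congrArg Fin.val h
      simp at this
      omega
    have hne_embd : ∀ j j' : Fin n, j ≠ j' → embd j ≠ embd j' := by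
      intro j j' hne h
      exact hne (embd_inj h)
    have hτp : τ (embd p) = π (ix0 n) := by
      rw [hτdef]
      simp only [Equiv.Perm.mul_apply]
      rw [Equiv.swap_apply_of_ne_of_ne (hne_embd p q hpq) (hne_embd_ix1 p),
        Equiv.swap_apply_left]
    have hτq : τ (embd q) = π (ix1 n) := by
      rw [hτdef]
      simp only [Equiv.Perm.mul_apply]
      rw [Equiv.swap_apply_left,
        Equiv.swap_apply_of_ne_of_ne (Ne.symm (hne_embd_ix1 p)) (by
          intro h
          have := congrArg Fin.val h
          simp at this)]
    have hτelse : ∀ j : Fin n, j ≠ p → j ≠ q → τ (embd j) = π (embd j) := by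
      intro j hjp hjq
      rw [hτdef]
      simp only [Equiv.Perm.mul_apply]
      rw [Equiv.swap_apply_of_ne_of_ne (hne_embd j q hjq) (hne_embd_ix1 j),
        Equiv.swap_apply_of_ne_of_ne (hne_embd j p hjp) (hne_embd_ix0 j)]
    have hlowelse : ∀ j : Fin n, j ≠ p → j ≠ q → ((π (embd j)) : ℕ) < n := by
      intro j hjp hjq
      by_contra hh
      rcases high_cases hh with h | h
      · have h2 : embd j = π⁻¹ (ix0 n) := by rw [← h]; exact (π.symm_apply_apply _).symm
        rw [← hembp] at h2
        exact hjp (embd_inj h2)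
      · have h2 : embd j = π⁻¹ (ix1 n) := by rw [← h]; exact (π.symm_apply_apply _).symm
        rw [← hembq] at h2
        exact hjq (embd_inj h2)
    have hlow : ∀ j : Fin n, ((τ (embd j)) : ℕ) < n := by
      intro j
      by_cases hjp : j = p
      · subst hjp; rw [hτp]; exact hem
      · by_cases hjq : j = q
        · subst hjq; rw [hτq]; exact hem1
        · rw [hτelse j hjp hjq]; exact hlowelse j hjp hjq
    obtain ⟨σ, hσ⟩ := restrictPerm τ hlow
    have hσp : σ p = i0 := by
      have h2 : embd (σ p) = embd i0 := by rw [hσ p, hτp, hembi0]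
      exact embd_inj h2
    have hσq : σ q = i1 := by
      have h2 : embd (σ q) = embd i1 := by rw [hσ q, hτq, hembi1]
      exact embd_inj h2
    have hcol : ∀ i j, G i (σ j) = ∑ l, A' i l * G l j := by
      intro i j
      have hexp : ∑ l, A' i l * G l j
          = (∑ l, A i l * G l j) + K i * ∑ l, d l * G l j := by
        rw [hA'def]
        simp [add_mul, Finset.sum_add_distrib, Finset.mul_sum, mul_assoc]
      by_cases hjp : j = p
      · subst hjp
        rw [hσp, hAix0 i, hexp, ← hd p, if_pos rfl, mul_one, ← hAp i, hKval i, hc3]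
      · by_cases hjq : j = q
        · subst hjq
          have hAq : ∑ l, A i l * G l q = a i := by
            rw [hAp i]
            exact Finset.sum_congr rfl fun l _ => by rw [hGpq l]
          rw [hσq, hAix1 i, hexp, ← hd q, if_neg (fun h => hpq h.symm), if_pos rfl,
            mul_one, hAq, hKval i, hc3]
        · have h2 : embd (σ j) = π (embd j) := by rw [hσ j, hτelse j hjp hjq]
          have h3 : G i (σ j) = extRow G a i (π (embd j)) := by
            rw [← h2, extRow_embd]
          rw [h3, hA i (embd j), hexp, ← hd j, if_neg hjp, if_neg hjq, mul_zero, add_zero]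
          exact Finset.sum_congr rfl fun l _ => by rw [extRow_embd]
    exact ⟨σ, epilogue C G hindep hspan f hf a b σ A' hcol hab⟩
  · -- easy case : some extension column stays among the last two coordinates
    rw [not_and_or] at hboth
    obtain ⟨t, t', hth, ht'h, htt', hπt⟩ :
        ∃ t t' : Fin (n+2), ¬ ((t : ℕ) < n) ∧ ¬ ((t' : ℕ) < n) ∧ t ≠ t' ∧
          ¬ (((π t) : ℕ) < n) := by
      rcases hboth with h | h
      · exact ⟨ix0 n, ix1 n, by simp, by simp,
          fun hh => by simpa using congrArg Fin.val hh, h⟩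
      · exact ⟨ix1 n, ix0 n, by simp, by simp,
          fun hh => by simpa using congrArg Fin.val hh, h⟩
    obtain ⟨w, hwh, hwne⟩ : ∃ w : Fin (n+2), ¬ ((w : ℕ) < n) ∧ w ≠ π t := by
      rcases high_cases hπt with h | h
      · refine ⟨ix1 n, by simp, ?_⟩
        rw [h]
        intro hh
        simpa using congrArg Fin.val hh
      · refine ⟨ix0 n, by simp, ?_⟩
        rw [h]
        intro hh
        simpa using congrArg Fin.val hh
    have hπu' : π (π⁻¹ w) = w := π.apply_symm_apply w
    have hpre : ∀ {x : Fin (n+2)}, ¬ (((π x) : ℕ) < n) → x = t ∨ x = π⁻¹ w := by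
      intro x hx
      rcases pairmem (π t) w hπt hwh (Ne.symm hwne) hx with h | h
      · exact Or.inl (π.injective h)
      · exact Or.inr (π.injective (by rw [h, hπu']))
    set τ : Equiv.Perm (Fin (n+2)) := π * Equiv.swap (π⁻¹ w) t' with hτdef
    have hembne : ∀ j : Fin n, embd j ≠ t' := by
      intro j h
      exact ht'h (by rw [← h]; exact j.isLt)
    have hτ_eq : ∀ x : Fin (n+2), x ≠ π⁻¹ w → x ≠ t' → τ x = π x := by
      intro x hx1 hx2
      rw [hτdef]
      simp only [Equiv.Perm.mul_apply]
      rw [Equiv.swap_apply_of_ne_of_ne hx1 hx2]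
    have hτu' : τ (π⁻¹ w) = π t' := by
      rw [hτdef]
      simp only [Equiv.Perm.mul_apply]
      rw [Equiv.swap_apply_left]
    have hlow : ∀ j : Fin n, ((τ (embd j)) : ℕ) < n := by
      intro j
      by_cases hju : embd j = π⁻¹ w
      · rw [hju, hτu']
        by_contra hh
        rcases hpre hh with h | h
        · exact htt' h.symm
        · exact ht'h (by rw [h, ← hju]; exact j.isLt)
      · rw [hτ_eq _ hju (hembne j)]
        by_contra hh
        rcases hpre hh with h | h
        · exact hth (by rw [← h]; exact j.isLt)
        · exact hju h
    obtain ⟨σ, hσ⟩ := restrictPerm τ hlow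
    have hcol : ∀ i j, G i (σ j) = ∑ l, A i l * G l j := by
      intro i j
      have hGσ : G i (σ j) = extRow G a i (τ (embd j)) := by
        rw [← hσ j, extRow_embd]
      by_cases hju : embd j = π⁻¹ w
      · rw [hGσ, hju, hτu', hA i t']
        have hgb : ∀ l, G l j = b l := by
          intro l
          obtain ⟨x, hxDa, hxy⟩ := hDbelem (extRow G b l) (Submodule.subset_span ⟨l, rfl⟩)
          calc G l j = extRow G b l (embd j) := (extRow_embd G b l j).symm
            _ = x (π (embd j)) := hxy (embd j)
            _ = x w := by rw [hju, hπu']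
            _ = x (π t) := code_high_eq hxDa hwh hπt
            _ = extRow G b l t := (hxy t).symm
            _ = b l := extRow_high _ _ _ hth
        refine Finset.sum_congr rfl fun l _ => ?_
        rw [extRow_high _ _ _ ht'h, hgb l]
      · rw [hGσ, hτ_eq _ hju (hembne j), hA i (embd j)]
        exact Finset.sum_congr rfl fun l _ => by rw [extRow_embd]
    have hab : ∀ i, a i = ∑ l, A i l * b l := by
      intro i
      have h2 := hA i t
      rw [extRow_high _ _ _ hπt] at h2
      rw [h2]
      exact Finset.sum_congr rfl fun l _ => by rw [extRow_high _ _ _ hth]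
    exact ⟨σ, epilogue C G hindep hspan f hf a b σ A hcol hab⟩

end OrbitAux

theorem equivalent_extensions_give_orbit {k : ℕ} (hk : 2 ≤ k)
    (C₁ : Code (2*k-2)) (h1 : IsSelfDual C₁)
    (G₁ : Matrix (Fin (k-1)) (Fin (2*k-2)) (ZMod 2))
    (hindep : LinearIndependent (ZMod 2) (fun i => G₁ i))
    (hspan : Submodule.span (ZMod 2) (Set.range (fun i => G₁ i)) = C₁)
    (f : Equiv.Perm (Fin (2*k-2)) → Matrix (Fin (k-1)) (Fin (k-1)) (ZMod 2))
    (hf : ∀ σ, PreservesCode σ C₁ → colPerm σ G₁ = f σ * G₁)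
    (a b : Fin (k-1) → ZMod 2)
    (hequiv : ∃ π : Equiv.Perm (Fin (2*k-2+2)),
      Submodule.map (LinearMap.funLeft (ZMod 2) (ZMod 2) π) (extCode G₁ a)
        = extCode G₁ b) :
    ∃ σ : Equiv.Perm (Fin (2*k-2)), PreservesCode σ C₁ ∧ a = (f σ).mulVec b := by
  exact OrbitAux.key C₁ h1 G₁ hindep hspan f hf a b hequiv
end

section
/- Every binary self-dual [n = 2k, k] code C with n > 2 whose last two coordinates are not identically equal is equivalent, via a permutation fixing the last two coordinates setwise, to a code with generator matrix of the form: first row (x₁ … x_{k−1}, 0 … 0, 1, 0), remaining rows (I_{k−1} | A | xᵀ | xᵀ) where x = (x₁,…,x_{k−1}), and (I_{k−1} | A) generates a self-dual [n−2, k−1] code. -/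
open Finset

def sysRow0 (k : ℕ) (x : Fin (k-1) → ZMod 2) : Fin (2*k) → ZMod 2 :=
  fun j => if h : (j : ℕ) < k-1 then x ⟨j, h⟩ else if (j : ℕ) = 2*k-2 then 1 else 0

def sysRow (k : ℕ) (A : Matrix (Fin (k-1)) (Fin (k-1)) (ZMod 2))
    (x : Fin (k-1) → ZMod 2) (i : Fin (k-1)) : Fin (2*k) → ZMod 2 :=
  fun j => if h : (j : ℕ) < k-1 then (if (j : ℕ) = (i : ℕ) then 1 else 0)
    else if h2 : (j : ℕ) < 2*k-2 then A i ⟨(j : ℕ) - (k-1), by omega⟩ else x i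

def sysRowIA (k : ℕ) (A : Matrix (Fin (k-1)) (Fin (k-1)) (ZMod 2))
    (i : Fin (k-1)) : Fin (2*k-2) → ZMod 2 :=
  fun j => if h : (j : ℕ) < k-1 then (if (j : ℕ) = (i : ℕ) then 1 else 0)
    else A i ⟨(j : ℕ) - (k-1), by have := j.isLt; omega⟩

namespace SD

open Submodule LinearMap Module Function

lemma zmod2_cases (z : ZMod 2) : z = 0 ∨ z = 1 := by revert z; decide
lemma zmod2_ne_iff {u v : ZMod 2} : u ≠ v ↔ u + v = 1 := by revert u v; decide
lemma zmod2_eq_iff {u v : ZMod 2} : u = v ↔ u + v = 0 := by revert u v; decide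

lemma mem_dualCode {n : ℕ} {C : Code n} {y : Fin n → ZMod 2} :
    y ∈ dualCode C ↔ ∀ x ∈ C, dotp x y = 0 := Iff.rfl

def dotL {n : ℕ} (y : Fin n → ZMod 2) : (Fin n → ZMod 2) →ₗ[ZMod 2] ZMod 2 where
  toFun x := dotp x y
  map_add' u v := by simp [dotp, add_mul, Finset.sum_add_distrib]
  map_smul' c u := by simp [dotp, Finset.mul_sum, mul_assoc]

@[simp] lemma dotL_apply {n : ℕ} (y x : Fin n → ZMod 2) : dotL y x = dotp x y := rfl

lemma dotp_single {n : ℕ} (j : Fin n) (y : Fin n → ZMod 2) :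
    dotp (Pi.single j 1) y = y j := by
  simp [dotp, Pi.single_apply, ite_mul]

noncomputable def toDualMap (n : ℕ) :
    (Fin n → ZMod 2) →ₗ[ZMod 2] Module.Dual (ZMod 2) (Fin n → ZMod 2) where
  toFun y := dotL y
  map_add' u v := by ext x; simp [dotp, mul_add, Finset.sum_add_distrib]
  map_smul' c u := by
    ext x; simp [dotp, Finset.mul_sum]; exact Finset.sum_congr rfl fun i _ => by ring

lemma toDualMap_injective (n : ℕ) : Function.Injective (toDualMap n) := by
  rw [injective_iff_map_eq_zero]
  intro y hy
  funext j
  have := congrArg (fun φ => φ (Pi.single j 1)) hy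
  simpa [toDualMap, dotp_single] using this

lemma toDualMap_surjective (n : ℕ) : Function.Surjective (toDualMap n) := by
  rw [← LinearMap.range_eq_top]
  apply Submodule.eq_top_of_finrank_eq
  rw [LinearMap.finrank_range_of_inj (toDualMap_injective n), Subspace.dual_finrank_eq]

lemma finrank_dualCode {n : ℕ} (C : Code n) :
    finrank (ZMod 2) (dualCode C) + finrank (ZMod 2) C = n := by
  classical
  set L : (Fin n → ZMod 2) →ₗ[ZMod 2] Module.Dual (ZMod 2) C :=
    C.dualRestrict.comp (toDualMap n) with hL
  have hker : LinearMap.ker L = dualCode C := by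
    ext y
    simp only [LinearMap.mem_ker, hL, LinearMap.comp_apply, mem_dualCode]
    constructor
    · intro h x hx
      have := congrArg (fun φ => φ (⟨x, hx⟩ : C)) h
      simpa [toDualMap] using this
    · intro h
      ext z
      simpa [toDualMap] using h z z.2
  have hsurj : Function.Surjective L :=
    (Subspace.dualRestrict_surjective).comp (toDualMap_surjective n)
  have hrn := LinearMap.finrank_range_add_finrank_ker L
  rw [LinearMap.range_eq_top.2 hsurj, hker] at hrn
  have h1 : finrank (ZMod 2) (⊤ : Submodule (ZMod 2) (Module.Dual (ZMod 2) C))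
      = finrank (ZMod 2) C := by
    rw [finrank_top, Subspace.dual_finrank_eq]
  have h2 : finrank (ZMod 2) (Fin n → ZMod 2) = n := by
    simp [Module.finrank_fintype_fun_eq_card]
  omega

lemma isSelfDual_of_le {n : ℕ} {C : Code n} (h1 : C ≤ dualCode C)
    (h2 : n = 2 * finrank (ZMod 2) C) : IsSelfDual C := by
  have h3 := finrank_dualCode C
  exact Submodule.eq_of_le_of_finrank_le h1 (by omega)

lemma IsSelfDual.finrank_eq {n : ℕ} {C : Code n} (h : IsSelfDual C) :
    2 * finrank (ZMod 2) C = n := by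
  have h3 := finrank_dualCode C
  rw [← h] at h3
  omega



lemma dotp_comp_perm {n : ℕ} (σ : Equiv.Perm (Fin n)) (x y : Fin n → ZMod 2) :
    dotp (x ∘ σ) (y ∘ σ) = dotp x y := by
  simpa [dotp] using Equiv.sum_comp σ (fun i => x i * y i)

lemma funLeft_perm_apply {n : ℕ} (σ : Equiv.Perm (Fin n)) (x : Fin n → ZMod 2) :
    LinearMap.funLeft (ZMod 2) (ZMod 2) σ x = x ∘ σ := rfl

lemma mem_map_funLeft {n : ℕ} (σ : Equiv.Perm (Fin n)) (C : Code n)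
    (y : Fin n → ZMod 2) :
    y ∈ Submodule.map (LinearMap.funLeft (ZMod 2) (ZMod 2) σ) C ↔ y ∘ σ.symm ∈ C := by
  constructor
  · rintro ⟨z, hz, rfl⟩
    have : (z ∘ σ) ∘ σ.symm = z := by
      funext j; simp
    rw [funLeft_perm_apply, this]; exact hz
  · intro hy
    refine ⟨y ∘ σ.symm, hy, ?_⟩
    rw [funLeft_perm_apply]
    funext j; simp

lemma dualCode_map_perm {n : ℕ} (σ : Equiv.Perm (Fin n)) (C : Code n) :
    dualCode (Submodule.map (LinearMap.funLeft (ZMod 2) (ZMod 2) σ) C)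
      = Submodule.map (LinearMap.funLeft (ZMod 2) (ZMod 2) σ) (dualCode C) := by
  ext y
  rw [mem_map_funLeft, mem_dualCode, mem_dualCode]
  constructor
  · intro h x hx
    have := h (x ∘ σ) (Submodule.mem_map_of_mem (p := C) hx)
    rwa [← dotp_comp_perm σ.symm (x ∘ σ) y, Function.comp_assoc,
      show (⇑σ ∘ ⇑σ.symm) = id by funext j; simp, Function.comp_id] at this
  · intro h x hx
    rw [mem_map_funLeft] at hx
    have := h (x ∘ σ.symm) hx
    rwa [dotp_comp_perm σ.symm x y] at this

lemma IsSelfDual.map_perm {n : ℕ} {C : Code n} (h : IsSelfDual C) (σ : Equiv.Perm (Fin n)) :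
    IsSelfDual (Submodule.map (LinearMap.funLeft (ZMod 2) (ZMod 2) σ) C) := by
  unfold IsSelfDual at *
  rw [dualCode_map_perm, ← h]

lemma finrank_map_perm {n : ℕ} (σ : Equiv.Perm (Fin n)) (C : Code n) :
    finrank (ZMod 2) (Submodule.map (LinearMap.funLeft (ZMod 2) (ZMod 2) σ) C)
      = finrank (ZMod 2) C := by
  have : Submodule.map (LinearMap.funLeft (ZMod 2) (ZMod 2) σ) C
      = Submodule.map (LinearEquiv.funCongrLeft (ZMod 2) (ZMod 2) σ : (Fin n → ZMod 2) →ₗ[ZMod 2] (Fin n → ZMod 2)) C := rfl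
  rw [this, LinearEquiv.finrank_map_eq]

lemma sum_split {n : ℕ} (hn : 2 ≤ n) (f : Fin n → ZMod 2) :
    ∑ i, f i = (∑ j : Fin (n-2), f (Fin.castLE (by omega) j))
      + f ⟨n-2, by omega⟩ + f ⟨n-1, by omega⟩ := by
  obtain ⟨m, rfl⟩ : ∃ m, n = m + 2 := ⟨n - 2, by omega⟩
  rw [Fin.sum_univ_castSucc, Fin.sum_univ_castSucc]
  rfl

lemma exists_info {n m : ℕ} (V : Code n) (hm : finrank (ZMod 2) V = m) :
    ∃ f : Fin m → Fin n, Function.Injective f ∧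
      ∀ v ∈ V, (∀ r, v (f r) = 0) → v = 0 := by
  classical
  -- coordinate functionals on V
  set L : Fin n → Module.Dual (ZMod 2) V := fun i => (LinearMap.proj i).comp V.subtype with hLdef
  have hspan : Submodule.span (ZMod 2) (Set.range L) = ⊤ := by
    rw [eq_top_iff]
    intro K _
    apply mem_span_of_iInf_ker_le_ker (L := L)
    intro v hv
    simp only [Submodule.mem_iInf, LinearMap.mem_ker] at hv
    have : v = 0 := by
      ext i
      exact hv i
    simp [this]
  obtain ⟨s, hs_sub, hs_span, hs_li⟩ := exists_linearIndependent (ZMod 2) (Set.range L)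
  rw [hspan] at hs_span
  have hfin : s.Finite := Set.Finite.subset (Set.finite_range L) hs_sub
  haveI : Fintype s := hfin.fintype
  have hcard : Fintype.card s = m := by
    have h1 : finrank (ZMod 2) (Submodule.span (ZMod 2) s) = s.toFinset.card :=
      finrank_span_set_eq_card (by exact hs_li)
    rw [hs_span] at h1
    rw [finrank_top] at h1
    rw [Subspace.dual_finrank_eq, hm] at h1
    rw [Set.toFinset_card] at h1
    omega
  -- choose coordinates
  have hchoice : ∀ y : s, ∃ i : Fin n, L i = (y : Module.Dual (ZMod 2) V) := by
    rintro ⟨y, hy⟩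
    obtain ⟨i, hi⟩ := hs_sub hy
    exact ⟨i, hi⟩
  choose c hc using hchoice
  let e : Fin m ≃ s := (Fintype.equivFinOfCardEq hcard).symm
  refine ⟨fun r => c (e r), ?_, ?_⟩
  · intro r r' hrr
    have hrr' : c (e r) = c (e r') := hrr
    have : L (c (e r)) = L (c (e r')) := congrArg L hrr'
    rw [hc, hc] at this
    exact e.injective (Subtype.ext this)
  · intro v hv h0
    have hall : ∀ K : Module.Dual (ZMod 2) V, K ⟨v, hv⟩ = 0 := by
      intro K
      have hK : K ∈ Submodule.span (ZMod 2) s := hs_span ▸ Submodule.mem_top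
      induction hK using Submodule.span_induction with
      | mem y hy =>
          have : y = L (c (e (e.symm ⟨y, hy⟩))) := by rw [hc]; simp
          rw [this]
          simpa [hLdef] using h0 (e.symm ⟨y, hy⟩)
      | zero => simp
      | add y z _ _ hy hz => simp [hy, hz]
      | smul t y _ hy => simp [hy]
    have : (⟨v, hv⟩ : V) = 0 := by
      rwa [← Module.forall_dual_apply_eq_zero_iff (ZMod 2)]
    simpa using congrArg Subtype.val this

lemma exists_perm_comp {n m : ℕ} (f g : Fin m → Fin n)
    (hf : Function.Injective f) (hg : Function.Injective g) :
    ∃ σ : Equiv.Perm (Fin n), ∀ r, σ (g r) = f r := by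
  classical
  have hcardf : Fintype.card (Set.range f) = m := by
    rw [Set.card_range_of_injective hf]; simp
  have hcardg : Fintype.card (Set.range g) = m := by
    rw [Set.card_range_of_injective hg]; simp
  have hcompl : Fintype.card (↥(Set.range g)ᶜ) = Fintype.card (↥(Set.range f)ᶜ) := by
    rw [Fintype.card_compl_set, Fintype.card_compl_set, hcardf, hcardg]
  let e0 : (Set.range g) ≃ (Set.range f) :=
    (Equiv.ofInjective g hg).symm.trans (Equiv.ofInjective f hf)
  let e1 : (↥(Set.range g)ᶜ) ≃ (↥(Set.range f)ᶜ) := Fintype.equivOfCardEq hcompl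
  let σ : Equiv.Perm (Fin n) :=
    ((Equiv.Set.sumCompl (Set.range g)).symm.trans
      (Equiv.sumCongr e0 e1)).trans (Equiv.Set.sumCompl (Set.range f))
  refine ⟨σ, fun r => ?_⟩
  have h1 : (Equiv.Set.sumCompl (Set.range g)).symm (g r) = Sum.inl ⟨g r, ⟨r, rfl⟩⟩ :=
    Equiv.Set.sumCompl_symm_apply_of_mem (Set.mem_range_self r)
  simp only [σ, Equiv.trans_apply, h1, Equiv.sumCongr_apply, Sum.map_inl]
  have h2 : e0 ⟨g r, ⟨r, rfl⟩⟩ = ⟨f r, ⟨r, rfl⟩⟩ := by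
    simp only [e0, Equiv.trans_apply]
    have : (⟨g r, ⟨r, rfl⟩⟩ : Set.range g) = Equiv.ofInjective g hg r := rfl
    rw [this, Equiv.symm_apply_apply]
    rfl
  rw [h2]
  simp

lemma exists_perm_extend {n m : ℕ} (h : m ≤ n) (σ : Equiv.Perm (Fin m)) :
    ∃ π : Equiv.Perm (Fin n),
      (∀ j : Fin m, π (Fin.castLE h j) = Fin.castLE h (σ j)) ∧
      (∀ j : Fin n, m ≤ (j : ℕ) → π j = j) := by
  classical
  refine ⟨⟨fun j => if hj : (j : ℕ) < m then Fin.castLE h (σ ⟨j, hj⟩) else j,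
          fun j => if hj : (j : ℕ) < m then Fin.castLE h (σ.symm ⟨j, hj⟩) else j,
          ?_, ?_⟩, ?_, ?_⟩
  · intro j
    by_cases hj : (j : ℕ) < m
    · simp only [hj, dif_pos]
      have hlt : ((Fin.castLE h (σ ⟨j, hj⟩)) : ℕ) < m := (σ ⟨j, hj⟩).isLt
      simp only [hlt, dif_pos]
      apply Fin.ext
      have : (⟨((Fin.castLE h (σ ⟨j, hj⟩)) : ℕ), hlt⟩ : Fin m) = σ ⟨j, hj⟩ := rfl
      rw [this, Equiv.symm_apply_apply]
      rfl
    · simp [hj]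
  · intro j
    by_cases hj : (j : ℕ) < m
    · simp only [hj, dif_pos]
      have hlt : ((Fin.castLE h (σ.symm ⟨j, hj⟩)) : ℕ) < m := (σ.symm ⟨j, hj⟩).isLt
      simp only [hlt, dif_pos]
      apply Fin.ext
      have : (⟨((Fin.castLE h (σ.symm ⟨j, hj⟩)) : ℕ), hlt⟩ : Fin m) = σ.symm ⟨j, hj⟩ := rfl
      rw [this, Equiv.apply_symm_apply]
      rfl
    · simp [hj]
  · intro j
    have hj : ((Fin.castLE h j) : ℕ) < m := j.isLt
    simp only [Equiv.coe_fn_mk, hj, dif_pos]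
    congr 1
  · intro j hj
    have : ¬ ((j : ℕ) < m) := by omega
    simp [Equiv.coe_fn_mk, this]

def phiAB {n : ℕ} (a b : Fin n) : (Fin n → ZMod 2) →ₗ[ZMod 2] ZMod 2 :=
  (LinearMap.proj a : (Fin n → ZMod 2) →ₗ[ZMod 2] ZMod 2) + LinearMap.proj b

@[simp] lemma phiAB_apply {n : ℕ} (a b : Fin n) (y : Fin n → ZMod 2) :
    phiAB a b y = y a + y b := rfl

lemma sysRowIA_lt {k : ℕ} (A : Matrix (Fin (k-1)) (Fin (k-1)) (ZMod 2))
    (i : Fin (k-1)) (j : Fin (2*k-2)) (hj : (j : ℕ) < k-1) :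
    sysRowIA k A i j = if (j : ℕ) = (i : ℕ) then 1 else 0 := by
  simp [sysRowIA, hj]

lemma sysRowIA_ge {k : ℕ} (A : Matrix (Fin (k-1)) (Fin (k-1)) (ZMod 2))
    (i : Fin (k-1)) (j : Fin (2*k-2)) (hj : ¬ ((j : ℕ) < k-1)) :
    sysRowIA k A i j = A i ⟨(j : ℕ) - (k-1), by have := j.isLt; omega⟩ := by
  simp [sysRowIA, hj]

lemma span_IA_coords {k : ℕ} (hk : 2 ≤ k) (A : Matrix (Fin (k-1)) (Fin (k-1)) (ZMod 2))
    {v : Fin (2*k-2) → ZMod 2}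
    (hv : v ∈ Submodule.span (ZMod 2) (Set.range (sysRowIA k A)))
    (h0 : ∀ r : Fin (k-1), v (Fin.castLE (by omega) r) = 0) : v = 0 := by
  obtain ⟨c, hc⟩ := (mem_span_range_iff_exists_fun (ZMod 2)).1 hv
  have hcz : ∀ r : Fin (k-1), c r = 0 := by
    intro r
    have h1 := congrFun hc (Fin.castLE (by omega) r)
    rw [h0 r, Finset.sum_apply] at h1
    have h2 : ∀ i : Fin (k-1), (c i • sysRowIA k A i) (Fin.castLE (by omega) r)
        = c i * (if (r : ℕ) = (i : ℕ) then 1 else 0) := by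
      intro i
      rw [Pi.smul_apply, smul_eq_mul, sysRowIA_lt A i _ (by simpa using r.isLt)]
      rfl
    rw [Finset.sum_congr rfl (fun i _ => h2 i)] at h1
    rw [Finset.sum_eq_single r (fun i _ hir => by
        rw [if_neg (fun hri => hir (Fin.val_injective hri.symm)), mul_zero])
      (fun hr => absurd (Finset.mem_univ r) hr)] at h1
    simpa using h1
  funext j
  rw [← hc, Finset.sum_apply]
  simp [hcz]

lemma dotp_split {k : ℕ} (hk : 2 ≤ k) (a b : Fin (2*k)) (ha : (a : ℕ) = 2*k-2)
    (hb : (b : ℕ) = 2*k-1) (w v : Fin (2*k) → ZMod 2) :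
    dotp w v = (∑ j : Fin (2*k-2),
        w (Fin.castLE (by omega) j) * v (Fin.castLE (by omega) j))
      + w a * v a + w b * v b := by
  have ha' : (⟨2*k-2, by omega⟩ : Fin (2*k)) = a := Fin.ext ha.symm
  have hb' : (⟨2*k-1, by omega⟩ : Fin (2*k)) = b := Fin.ext hb.symm
  rw [dotp, sum_split (by omega : 2 ≤ 2*k) (fun i => w i * v i), ha', hb']

lemma ker_restrict_triv {k : ℕ} (hk : 2 ≤ k) (a b : Fin (2*k)) (ha : (a : ℕ) = 2*k-2)
    (hb : (b : ℕ) = 2*k-1) (D : Code (2*k)) (hD : IsSelfDual D)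
    (hne : ∃ y ∈ D, y a ≠ y b)
    (z : Fin (2*k) → ZMod 2) (hz : z ∈ D) (hzab : z a = z b)
    (h0 : ∀ j : Fin (2*k-2), z (Fin.castLE (by omega) j) = 0) : z = 0 := by
  rcases zmod2_cases (z a) with h|h
  · funext j
    show z j = 0
    rcases lt_or_ge (j : ℕ) (2*k-2) with hj|hj
    · have : j = Fin.castLE (by omega) (⟨(j : ℕ), hj⟩ : Fin (2*k-2)) := Fin.ext rfl
      rw [this]; exact h0 _
    · have hval : j = a ∨ j = b := by
        have := j.isLt
        rcases Nat.lt_or_ge (j : ℕ) (2*k-1) with h'|h'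
        · exact Or.inl (Fin.ext (by omega))
        · exact Or.inr (Fin.ext (by omega))
      rcases hval with rfl|rfl
      · exact h
      · rw [← hzab]; exact h
  · exfalso
    obtain ⟨y, hy, hyab⟩ := hne
    have hzdual : z ∈ dualCode D := hD ▸ hz
    have h1 := hzdual y hy
    rw [dotp_split hk a b ha hb y z] at h1
    have h2 : ∀ j : Fin (2*k-2),
        y (Fin.castLE (by omega : 2*k-2 ≤ 2*k) j) * z (Fin.castLE (by omega) j) = 0 := by
      intro j; rw [h0 j, mul_zero]
    rw [Finset.sum_congr rfl (fun j _ => h2 j), Finset.sum_const_zero, zero_add,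
      ← hzab, h, mul_one, mul_one] at h1
    have h3 := zmod2_ne_iff.mp hyab
    rw [h1] at h3
    exact absurd h3 (by decide)

lemma zmod2_add_self (z : ZMod 2) : z + z = 0 := by revert z; decide

lemma sum_delta {m : ℕ} (c : Fin m → ZMod 2) (r : Fin m) :
    (∑ i, c i * (if (r : ℕ) = (i : ℕ) then 1 else 0)) = c r := by
  rw [Finset.sum_eq_single r
    (fun i _ hir => by rw [if_neg (fun hri => hir (Fin.val_injective hri.symm)), mul_zero])
    (fun hr => absurd (Finset.mem_univ r) hr)]
  simp

lemma sum_delta' {m : ℕ} (c : Fin m → ZMod 2) (i : Fin m) :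
    (∑ r : Fin m, (if (r : ℕ) = (i : ℕ) then 1 else 0) * c r) = c i := by
  rw [Finset.sum_eq_single i
    (fun r _ hri => by rw [if_neg (fun hri' => hri (Fin.val_injective hri')), zero_mul])
    (fun hr => absurd (Finset.mem_univ i) hr)]
  simp

lemma sysRow_lt {k : ℕ} (A : Matrix (Fin (k-1)) (Fin (k-1)) (ZMod 2))
    (x : Fin (k-1) → ZMod 2) (i : Fin (k-1)) (j : Fin (2*k)) (hj : (j : ℕ) < k-1) :
    sysRow k A x i j = if (j : ℕ) = (i : ℕ) then 1 else 0 := by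
  simp [sysRow, hj]

lemma sysRow_mid {k : ℕ} (A : Matrix (Fin (k-1)) (Fin (k-1)) (ZMod 2))
    (x : Fin (k-1) → ZMod 2) (i : Fin (k-1)) (j : Fin (2*k))
    (hj1 : ¬ ((j : ℕ) < k-1)) (hj2 : (j : ℕ) < 2*k-2) :
    sysRow k A x i j = A i ⟨(j : ℕ) - (k-1), by omega⟩ := by
  simp [sysRow, hj1, hj2]

lemma sysRow_hi {k : ℕ} (A : Matrix (Fin (k-1)) (Fin (k-1)) (ZMod 2))
    (x : Fin (k-1) → ZMod 2) (i : Fin (k-1)) (j : Fin (2*k))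
    (hj2 : ¬ ((j : ℕ) < 2*k-2)) : sysRow k A x i j = x i := by
  have hj1 : ¬ ((j : ℕ) < k-1) := by omega
  simp [sysRow, hj1, hj2]

lemma sysRow0_lt {k : ℕ} (x : Fin (k-1) → ZMod 2) (j : Fin (2*k)) (hj : (j : ℕ) < k-1) :
    sysRow0 k x j = x ⟨(j : ℕ), hj⟩ := by
  simp [sysRow0, hj]

lemma sysRow0_mid {k : ℕ} (x : Fin (k-1) → ZMod 2) (j : Fin (2*k))
    (hj1 : ¬ ((j : ℕ) < k-1)) (hj2 : (j : ℕ) ≠ 2*k-2) : sysRow0 k x j = 0 := by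
  simp [sysRow0, hj1, hj2]

lemma sysRow0_a {k : ℕ} (hk : 2 ≤ k) (x : Fin (k-1) → ZMod 2) (j : Fin (2*k))
    (hj : (j : ℕ) = 2*k-2) : sysRow0 k x j = 1 := by
  have hj1 : ¬ ((j : ℕ) < k-1) := by omega
  simp only [sysRow0]
  rw [dif_neg hj1, if_pos hj]

lemma sum_row0_pair {k : ℕ} (hk : 2 ≤ k) (x : Fin (k-1) → ZMod 2)
    (v : Fin (2*k-2) → ZMod 2) :
    (∑ j : Fin (2*k-2), v j * sysRow0 k x (Fin.castLE (by omega) j))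
      = ∑ r : Fin (k-1), v (Fin.castLE (by omega) r) * x r := by
  rw [← Finset.sum_filter_add_sum_filter_not Finset.univ (fun j : Fin (2*k-2) => (j : ℕ) < k-1)]
  have h2 : ∀ j ∈ Finset.univ.filter (fun j : Fin (2*k-2) => ¬ ((j : ℕ) < k-1)),
      v j * sysRow0 k x (Fin.castLE (by omega) j) = 0 := by
    intro j hj
    rw [Finset.mem_filter] at hj
    rw [sysRow0_mid x _ (by simpa using hj.2) (by have := j.isLt; simp; omega), mul_zero]
  rw [Finset.sum_congr rfl h2, Finset.sum_const_zero, add_zero]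
  refine Finset.sum_bij' (fun (j : Fin (2*k-2)) hj => (⟨(j : ℕ), by
      simp only [Finset.mem_filter] at hj; exact hj.2⟩ : Fin (k-1)))
    (fun (r : Fin (k-1)) _ => Fin.castLE (by omega) r) ?_ ?_ ?_ ?_ ?_
  · intro j hj; exact Finset.mem_univ _
  · intro r _; simp only [Finset.mem_filter, Finset.mem_univ, true_and]
    exact r.isLt
  · intro j hj; exact Fin.ext rfl
  · intro r _; exact Fin.ext rfl
  · intro j hj
    rw [Finset.mem_filter] at hj
    rw [sysRow0_lt x _ hj.2]
    rfl

lemma sum_delta2 {m : ℕ} (c : Fin m → ZMod 2) (r : Fin m) :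
    (∑ i, c i * (if r = i then 1 else 0)) = c r := by
  rw [Finset.sum_eq_single r
    (fun i _ hir => by rw [if_neg (fun hri => hir hri.symm), mul_zero])
    (fun hr => absurd (Finset.mem_univ r) hr)]
  simp

lemma core {k : ℕ} (hk : 2 ≤ k) (a b : Fin (2*k)) (ha : (a : ℕ) = 2*k-2)
    (hb : (b : ℕ) = 2*k-1) (D : Code (2*k)) (hD : IsSelfDual D)
    (A : Matrix (Fin (k-1)) (Fin (k-1)) (ZMod 2))
    (hV : Submodule.map (LinearMap.funLeft (ZMod 2) (ZMod 2)
          (Fin.castLE (by omega : 2*k-2 ≤ 2*k)))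
        (D ⊓ LinearMap.ker (phiAB a b))
      = Submodule.span (ZMod 2) (Set.range (sysRowIA k A)))
    (hne : ∃ y ∈ D, y a ≠ y b) :
    (∃ u ∈ D, u a ≠ u b ∧ ∀ r : Fin (k-1), u ⟨(r : ℕ), by omega⟩ = 0) ∧
    ∃ x : Fin (k-1) → ZMod 2, ∀ u, u ∈ D → u a ≠ u b →
      (∀ r : Fin (k-1), u ⟨(r : ℕ), by omega⟩ = 0) → u a = 0 →
      D = Submodule.span (ZMod 2)
        (insert (sysRow0 k x) (Set.range (sysRow k A x))) := by
  classical
  have h2k : 2*k-2 ≤ 2*k := by omega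
  have hk1 : k-1 ≤ 2*k-2 := by omega
  set ρ : (Fin (2*k) → ZMod 2) →ₗ[ZMod 2] (Fin (2*k-2) → ZMod 2) :=
    LinearMap.funLeft (ZMod 2) (ZMod 2) (Fin.castLE h2k) with hρdef
  have hρ_apply : ∀ (z : Fin (2*k) → ZMod 2) (j : Fin (2*k-2)),
      ρ z j = z (Fin.castLE h2k j) := fun _ _ => rfl
  -- generators g i
  have hg : ∀ i : Fin (k-1), ∃ gi, (gi ∈ D ∧ phiAB a b gi = 0) ∧ ρ gi = sysRowIA k A i := by
    intro i
    have h1 : sysRowIA k A i ∈ Submodule.span (ZMod 2) (Set.range (sysRowIA k A)) :=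
      Submodule.subset_span ⟨i, rfl⟩
    rw [← hV] at h1
    obtain ⟨gi, hgmem, hgim⟩ := h1
    exact ⟨gi, ⟨hgmem.1, hgmem.2⟩, hgim⟩
  choose g hgD hgρ using hg
  have hgD' : ∀ i, g i ∈ D := fun i => (hgD i).1
  have hφg : ∀ i, phiAB a b (g i) = 0 := fun i => (hgD i).2
  have hgab : ∀ i, g i a = g i b := by
    intro i
    have h1 := hφg i
    rw [phiAB_apply] at h1
    exact zmod2_eq_iff.2 h1
  set x : Fin (k-1) → ZMod 2 := fun i => g i a with hxdef
  have hgc : ∀ i (j : Fin (2*k-2)), g i (Fin.castLE h2k j) = sysRowIA k A i j := by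
    intro i j
    conv_rhs => rw [← hgρ i]
    rfl
  have hga : ∀ i, g i a = x i := fun i => rfl
  have hgb : ∀ i, g i b = x i := fun i => (hgab i).symm
  -- first coordinates of g i
  have hgfirst : ∀ i (r : Fin (k-1)),
      g i (⟨(r : ℕ), by omega⟩ : Fin (2*k)) = if (r : ℕ) = (i : ℕ) then 1 else 0 := by
    intro i r
    have h1 : g i (Fin.castLE h2k (Fin.castLE hk1 r)) = sysRowIA k A i (Fin.castLE hk1 r) :=
      hgc i (Fin.castLE hk1 r)
    rw [sysRowIA_lt A i _ (by simpa using r.isLt)] at h1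
    exact h1
  -- g i = sysRow
  have hgrow : ∀ i, g i = sysRow k A x i := by
    intro i
    funext j
    rcases lt_or_ge (j : ℕ) (2*k-2) with hj|hj
    · have h1 : g i j = sysRowIA k A i ⟨(j : ℕ), hj⟩ := hgc i ⟨(j : ℕ), hj⟩
      rcases lt_or_ge (j : ℕ) (k-1) with hj1|hj1
      · rw [h1, sysRowIA_lt A i _ (by simpa using hj1), sysRow_lt A x i j hj1]
      · rw [h1, sysRowIA_ge A i _ (by simpa using hj1),
          sysRow_mid A x i j (by omega) hj]
    · have hj2 : ¬ ((j : ℕ) < 2*k-2) := by omega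
      rw [sysRow_hi A x i j hj2]
      have hval : j = a ∨ j = b := by
        have := j.isLt
        rcases Nat.lt_or_ge (j : ℕ) (2*k-1) with h'|h'
        · exact Or.inl (Fin.ext (by omega))
        · exact Or.inr (Fin.ext (by omega))
      rcases hval with rfl|rfl
      · exact hga i
      · exact hgb i
  -- D ∩ ker φ is spanned by the g i
  have hD0span : ∀ z, z ∈ D → phiAB a b z = 0 →
      z ∈ Submodule.span (ZMod 2) (Set.range g) := by
    intro z hz hφz
    set c : Fin (k-1) → ZMod 2 := fun r => z ⟨(r : ℕ), by omega⟩ with hcdef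
    set z' : Fin (2*k) → ZMod 2 := z - ∑ i, c i • g i with hz'def
    have hz'D : z' ∈ D := Submodule.sub_mem _ hz
      (Submodule.sum_mem _ (fun i _ => Submodule.smul_mem _ _ (hgD' i)))
    have hφz' : phiAB a b z' = 0 := by
      rw [hz'def, map_sub, map_sum, hφz]
      simp [hφg]
    have hρz'span : ρ z' ∈ Submodule.span (ZMod 2) (Set.range (sysRowIA k A)) := by
      have h1 : ρ z' = ρ z - ∑ i, c i • sysRowIA k A i := by
        rw [hz'def, map_sub, map_sum]
        congr 1
        exact Finset.sum_congr rfl (fun i _ => by rw [map_smul, hgρ])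
      rw [h1]
      apply Submodule.sub_mem
      · rw [← hV]
        exact ⟨z, ⟨hz, by simpa using hφz⟩, rfl⟩
      · exact Submodule.sum_mem _
          (fun i _ => Submodule.smul_mem _ _ (Submodule.subset_span ⟨i, rfl⟩))
    have hρz'0 : ρ z' = 0 := by
      apply span_IA_coords hk A hρz'span
      intro r
      have h1 : ρ z' (Fin.castLE hk1 r) = z' (⟨(r : ℕ), by omega⟩ : Fin (2*k)) := rfl
      rw [h1, hz'def]
      simp only [Pi.sub_apply, Finset.sum_apply, Pi.smul_apply, smul_eq_mul]
      rw [Finset.sum_congr rfl (fun i _ => by rw [hgfirst i r]), sum_delta]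
      exact sub_self _
    have hz'0 : z' = 0 := by
      apply ker_restrict_triv hk a b ha hb D hD hne z' hz'D
      · have hzz : z' a + z' b = 0 := by simpa using hφz'
        exact zmod2_eq_iff.2 hzz
      · intro j
        have h1 : z' (Fin.castLE h2k j) = ρ z' j := rfl
        rw [h1, hρz'0]
        rfl
    have hzz : z = ∑ i, c i • g i := by
      have := sub_eq_zero.mp (hz'def ▸ hz'0)
      exact this
    rw [hzz]
    exact Submodule.sum_mem _
      (fun i _ => Submodule.smul_mem _ _ (Submodule.subset_span ⟨i, rfl⟩))
  constructor
  · -- existence of u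
    obtain ⟨y, hy, hyab⟩ := hne
    set cy : Fin (k-1) → ZMod 2 := fun r => y ⟨(r : ℕ), by omega⟩ with hcydef
    refine ⟨y - ∑ i, cy i • g i, Submodule.sub_mem _ hy
      (Submodule.sum_mem _ (fun i _ => Submodule.smul_mem _ _ (hgD' i))), ?_, ?_⟩
    · have h1 : phiAB a b (y - ∑ i, cy i • g i) = phiAB a b y := by
        rw [map_sub, map_sum]
        simp [hφg]
      rw [phiAB_apply, phiAB_apply] at h1
      rw [zmod2_ne_iff] at hyab ⊢
      rw [h1]
      exact hyab
    · intro r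
      simp only [Pi.sub_apply, Finset.sum_apply, Pi.smul_apply, smul_eq_mul]
      rw [Finset.sum_congr rfl (fun i _ => by rw [hgfirst i r]), sum_delta]
      exact sub_self _
  refine ⟨x, ?_⟩
  intro u huD huab hufirst hua0
  have hub1 : u b = 1 := by
    rcases zmod2_cases (u b) with h|h
    · exact absurd (hua0.trans h.symm) huab
    · exact h
  have hφu : phiAB a b u = 1 := by
    rw [phiAB_apply, hua0, hub1, zero_add]
  -- spanning property of D
  have hspanD : ∀ w ∈ D, w ∈ Submodule.span (ZMod 2) (insert u (Set.range g)) := by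
    intro w hw
    rcases zmod2_cases (phiAB a b w) with hφw|hφw
    · exact Submodule.span_mono (Set.subset_insert _ _) (hD0span w hw hφw)
    · have h1 : phiAB a b (w - u) = 0 := by
        rw [map_sub, hφw, hφu, sub_self]
      have h2 := hD0span _ (Submodule.sub_mem _ hw huD) h1
      have h3 : w = (w - u) + u := (sub_add_cancel w u).symm
      rw [h3]
      exact Submodule.add_mem _
        (Submodule.span_mono (Set.subset_insert _ _) h2)
        (Submodule.subset_span (Set.mem_insert _ _))
  -- row0 facts
  have hrow0a : sysRow0 k x a = 1 := sysRow0_a hk x a ha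
  have hrow0b : sysRow0 k x b = 0 := sysRow0_mid x b (by omega) (by omega)
  -- row0 ∈ D
  have hrow0 : sysRow0 k x ∈ D := by
    rw [hD, mem_dualCode]
    intro w hw
    have hwspan := hspanD w hw
    have hgen : ∀ v ∈ insert u (Set.range g), v ∈ LinearMap.ker (dotL (sysRow0 k x)) := by
      rintro v (rfl | ⟨i, rfl⟩)
      · rw [LinearMap.mem_ker, dotL_apply, dotp_split hk a b ha hb,
          sum_row0_pair hk x, hua0, hrow0b, zero_mul, mul_zero, add_zero, add_zero]
        rw [Finset.sum_congr rfl (fun r _ => by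
          rw [show v (Fin.castLE h2k (Fin.castLE hk1 r)) = (0 : ZMod 2) from hufirst r,
            zero_mul]), Finset.sum_const_zero]
      · rw [LinearMap.mem_ker, dotL_apply, dotp_split hk a b ha hb,
          sum_row0_pair hk x, hrow0a, hrow0b, mul_one, mul_zero, add_zero,
          hga i]
        rw [Finset.sum_congr rfl (fun r _ => by
          rw [show g i (Fin.castLE h2k (Fin.castLE hk1 r))
              = (if (r : ℕ) = (i : ℕ) then 1 else 0) from hgfirst i r]), sum_delta']
        exact zmod2_add_self (x i)
    have h4 : Submodule.span (ZMod 2) (insert u (Set.range g))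
        ≤ LinearMap.ker (dotL (sysRow0 k x)) := Submodule.span_le.2 hgen
    exact h4 hwspan
  -- conclusion
  have hgmemD : ∀ i, sysRow k A x i ∈ D := fun i => (hgrow i) ▸ hgD' i
  apply le_antisymm
  · intro w hw
    have h1 := hspanD w hw
    have hrangeg : Set.range g = Set.range (sysRow k A x) := by
      rw [show g = sysRow k A x from funext hgrow]
    have h2 : Submodule.span (ZMod 2) (insert u (Set.range g))
        ≤ Submodule.span (ZMod 2)
            (insert (sysRow0 k x) (Set.range (sysRow k A x))) := by
      rw [Submodule.span_le]
      rintro v (rfl | ⟨i, rfl⟩)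
      · -- u = (u - row0) + row0
        have h3 : phiAB a b (v - sysRow0 k x) = 0 := by
          rw [map_sub, phiAB_apply, phiAB_apply, hua0, hub1, hrow0a, hrow0b]
          decide
        have h4 := hD0span _ (Submodule.sub_mem _ huD hrow0) h3
        rw [hrangeg] at h4
        have h5 : v = (v - sysRow0 k x) + sysRow0 k x := (sub_add_cancel _ _).symm
        rw [h5]
        exact Submodule.add_mem _
          (Submodule.span_mono (Set.subset_insert _ _) h4)
          (Submodule.subset_span (Set.mem_insert _ _))
      · exact Submodule.subset_span (Set.mem_insert_of_mem _ ⟨i, (hgrow i).symm⟩)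
    exact h2 h1
  · rw [Submodule.span_le]
    rintro v (rfl | ⟨i, rfl⟩)
    · exact hrow0
    · exact hgmemD i

end SD

set_option maxHeartbeats 2000000 in
open SD Submodule Module in
theorem equivalent_to_systematic_form {k : ℕ} (hk : 2 ≤ k) (C : Code (2*k))
    (h : IsSelfDual C)
    (a b : Fin (2*k)) (ha : (a : ℕ) = 2*k-2) (hb : (b : ℕ) = 2*k-1)
    (hne : ∃ y ∈ C, y a ≠ y b) :
    ∃ (π : Equiv.Perm (Fin (2*k))) (x : Fin (k-1) → ZMod 2)
      (A : Matrix (Fin (k-1)) (Fin (k-1)) (ZMod 2)),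
      ({π a, π b} : Set (Fin (2*k))) = {a, b} ∧
      Submodule.map (LinearMap.funLeft (ZMod 2) (ZMod 2) π) C
        = Submodule.span (ZMod 2) (insert (sysRow0 k x) (Set.range (sysRow k A x))) ∧
      IsSelfDual (Submodule.span (ZMod 2) (Set.range (sysRowIA k A))) := by
  classical
  obtain ⟨y0, hy0, hy0ab⟩ := hne
  have h2k : 2*k-2 ≤ 2*k := by omega
  have hk1 : k-1 ≤ 2*k-2 := by omega
  have hfC : finrank (ZMod 2) C = k := by
    have := SD.IsSelfDual.finrank_eq h
    omega
  set φ : (Fin (2*k) → ZMod 2) →ₗ[ZMod 2] ZMod 2 := phiAB a b with hφdef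
  set C0 : Code (2*k) := C ⊓ LinearMap.ker φ with hC0def
  -- finrank C0 = k-1
  have hfC0 : finrank (ZMod 2) C0 = k-1 := by
    set L : C →ₗ[ZMod 2] ZMod 2 := φ.domRestrict C with hLdef
    have hL1 : L ⟨y0, hy0⟩ = 1 := by
      show φ y0 = 1
      rw [hφdef, phiAB_apply, ← zmod2_ne_iff]
      exact hy0ab
    have hrange : LinearMap.range L = ⊤ := by
      rw [eq_top_iff]
      intro t _
      have h1 : t • (1 : ZMod 2) ∈ LinearMap.range L :=
        Submodule.smul_mem _ t ⟨⟨y0, hy0⟩, hL1⟩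
      simpa using h1
    have hker : finrank (ZMod 2) (LinearMap.ker L) = k - 1 := by
      have hrn := LinearMap.finrank_range_add_finrank_ker L
      rw [hrange, finrank_top] at hrn
      have h1 : finrank (ZMod 2) (ZMod 2) = 1 := Module.finrank_self _
      omega
    have hmap : Submodule.map C.subtype (LinearMap.ker L) = C0 := by
      ext z
      constructor
      · rintro ⟨⟨w, hw⟩, hwker, rfl⟩
        exact ⟨hw, by exact hwker⟩
      · rintro ⟨hz1, hz2⟩
        exact ⟨⟨z, hz1⟩, by exact hz2, rfl⟩
    rw [← hmap, ← LinearEquiv.finrank_eq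
      (Submodule.equivMapOfInjective C.subtype (Submodule.injective_subtype C)
        (LinearMap.ker L))]
    exact hker
  set ρ : (Fin (2*k) → ZMod 2) →ₗ[ZMod 2] (Fin (2*k-2) → ZMod 2) :=
    LinearMap.funLeft (ZMod 2) (ZMod 2) (Fin.castLE h2k) with hρdef
  -- injectivity of ρ on C0
  have hinj : ∀ z ∈ C0, ρ z = 0 → z = 0 := by
    intro z hz hρz
    apply ker_restrict_triv hk a b ha hb C h ⟨y0, hy0, hy0ab⟩ z hz.1
    · have h1 : φ z = 0 := hz.2
      rw [hφdef, phiAB_apply] at h1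
      exact zmod2_eq_iff.2 (by simpa using h1)
    · intro j
      have h1 : z (Fin.castLE h2k j) = ρ z j := rfl
      rw [h1, hρz]
      rfl
  -- C' = map ρ C0
  have hfC' : finrank (ZMod 2) (Submodule.map ρ C0) = k-1 := by
    set L2 : C0 →ₗ[ZMod 2] (Fin (2*k-2) → ZMod 2) := ρ.domRestrict C0 with hL2def
    have hkerL2 : LinearMap.ker L2 = ⊥ := by
      rw [LinearMap.ker_eq_bot']
      intro z hz
      have h1 : (z : Fin (2*k) → ZMod 2) = 0 := hinj z z.2 hz
      exact Subtype.ext h1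
    have hrn := LinearMap.finrank_range_add_finrank_ker L2
    rw [hkerL2, finrank_bot, add_zero, hfC0] at hrn
    rw [← hrn, hL2def]
    rw [LinearMap.range_domRestrict]
  have horth : Submodule.map ρ C0 ≤ dualCode (Submodule.map ρ C0) := by
    rintro v ⟨zv, hzv, rfl⟩
    rw [mem_dualCode]
    rintro w ⟨zw, hzw, rfl⟩
    have hd : dotp zw zv = 0 := by
      have h1 : zv ∈ dualCode C := h ▸ hzv.1
      exact h1 zw hzw.1
    have hwa : zw a = zw b := by
      have h1 : φ zw = 0 := hzw.2
      rw [hφdef, phiAB_apply] at h1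
      exact zmod2_eq_iff.2 (by simpa using h1)
    have hva : zv a = zv b := by
      have h1 : φ zv = 0 := hzv.2
      rw [hφdef, phiAB_apply] at h1
      exact zmod2_eq_iff.2 (by simpa using h1)
    have hsplit := dotp_split hk a b ha hb zw zv
    rw [hd, ← hwa, ← hva] at hsplit
    have h2 : dotp (ρ zw) (ρ zv)
        = ∑ j : Fin (2*k-2), zw (Fin.castLE h2k j) * zv (Fin.castLE h2k j) := rfl
    rw [h2]
    have h3 := hsplit.symm
    rw [add_assoc, zmod2_add_self, add_zero] at h3
    exact h3
  have hC'sd : IsSelfDual (Submodule.map ρ C0) :=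
    isSelfDual_of_le horth (by omega)
  -- information set and permutation
  obtain ⟨f, hfinj, hfinfo⟩ := exists_info (Submodule.map ρ C0) hfC'
  obtain ⟨σ, hσ⟩ := exists_perm_comp f (Fin.castLE hk1) hfinj
    (fun r r' hrr => by
      have : ((Fin.castLE hk1 r : Fin (2*k-2)) : ℕ) = ((Fin.castLE hk1 r' : Fin (2*k-2)) : ℕ) := by rw [hrr]
      exact Fin.ext this)
  set V1 : Code (2*k-2) :=
    Submodule.map (LinearMap.funLeft (ZMod 2) (ZMod 2) σ) (Submodule.map ρ C0) with hV1def
  have hV1sd : IsSelfDual V1 := SD.IsSelfDual.map_perm hC'sd σ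
  have hfV1 : finrank (ZMod 2) V1 = k-1 := by
    rw [hV1def, finrank_map_perm, hfC']
  have hV1inj : ∀ v ∈ V1, (∀ r : Fin (k-1), v (Fin.castLE hk1 r) = 0) → v = 0 := by
    rintro v ⟨z, hz, rfl⟩ h0
    have h1 : ∀ r, z (f r) = 0 := by
      intro r
      have h2 := h0 r
      rw [funLeft_perm_apply] at h2
      rw [← hσ r]
      exact h2
    rw [hfinfo z hz h1]
    simp
  -- the projection to the first k-1 coordinates, restricted to V1
  set p : V1 →ₗ[ZMod 2] (Fin (k-1) → ZMod 2) :=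
    (LinearMap.funLeft (ZMod 2) (ZMod 2) (Fin.castLE hk1)).domRestrict V1 with hpdef
  have hpinj : Function.Injective p := by
    rw [← LinearMap.ker_eq_bot, LinearMap.ker_eq_bot']
    intro v hv
    apply Subtype.ext
    apply hV1inj v v.2
    intro r
    exact congrFun hv r
  have hpsurj : Function.Surjective p := by
    have hEq : finrank (ZMod 2) V1 = finrank (ZMod 2) (Fin (k-1) → ZMod 2) := by
      rw [hfV1, Module.finrank_fintype_fun_eq_card, Fintype.card_fin]
    exact (LinearMap.injective_iff_surjective_of_finrank_eq_finrank hEq).1 hpinj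
  have hg' : ∀ i : Fin (k-1), ∃ v : V1, p v = Pi.single i 1 := fun i => hpsurj _
  choose g' hg'p using hg'
  set A : Matrix (Fin (k-1)) (Fin (k-1)) (ZMod 2) :=
    fun i m => (g' i : Fin (2*k-2) → ZMod 2) ⟨k-1+(m : ℕ), by have := m.isLt; omega⟩
    with hAdef
  have hg'first : ∀ (i r : Fin (k-1)),
      (g' i : Fin (2*k-2) → ZMod 2) (Fin.castLE hk1 r)
        = (Pi.single i (1 : ZMod 2) : Fin (k-1) → ZMod 2) r :=
    fun i r => congrFun (hg'p i) r
  have hrowIA : ∀ i, sysRowIA k A i = (g' i : Fin (2*k-2) → ZMod 2) := by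
    intro i
    funext j
    rcases lt_or_ge (j : ℕ) (k-1) with hj|hj
    · rw [sysRowIA_lt A i j (by simpa using hj)]
      have h1 : (g' i : Fin (2*k-2) → ZMod 2) j
          = (Pi.single i (1 : ZMod 2) : Fin (k-1) → ZMod 2) ⟨(j : ℕ), hj⟩ :=
        hg'first i ⟨(j : ℕ), hj⟩
      rw [h1, Pi.single_apply]
      by_cases hji : (j : ℕ) = (i : ℕ)
      · rw [if_pos hji, if_pos (show (⟨(j : ℕ), hj⟩ : Fin (k-1)) = i from Fin.ext hji)]
      · rw [if_neg hji,
          if_neg (show ¬ (⟨(j : ℕ), hj⟩ : Fin (k-1)) = i from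
            fun hc => hji (congrArg Fin.val hc))]
    · rw [sysRowIA_ge A i j (by omega)]
      have h1 : A i ⟨(j : ℕ)-(k-1), by have := j.isLt; omega⟩
          = (g' i : Fin (2*k-2) → ZMod 2) ⟨k-1+((j : ℕ)-(k-1)), by have := j.isLt; omega⟩ := rfl
      rw [h1]
      exact congrArg (g' i : Fin (2*k-2) → ZMod 2)
        (Fin.ext (show k-1+((j : ℕ)-(k-1)) = (j : ℕ) by omega))
  have hV1span : V1 = Submodule.span (ZMod 2) (Set.range (sysRowIA k A)) := by
    apply le_antisymm
    · intro v hv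
      set c : Fin (k-1) → ZMod 2 := fun r => v (Fin.castLE hk1 r) with hcdef
      have hsub : v - ∑ r, c r • (g' r : Fin (2*k-2) → ZMod 2) ∈ V1 :=
        Submodule.sub_mem _ hv
          (Submodule.sum_mem _ (fun r _ => Submodule.smul_mem _ _ (g' r).2))
      have h0 : ∀ r : Fin (k-1),
          (v - ∑ i, c i • (g' i : Fin (2*k-2) → ZMod 2)) (Fin.castLE hk1 r) = 0 := by
        intro r
        simp only [Pi.sub_apply, Finset.sum_apply, Pi.smul_apply, smul_eq_mul]
        rw [Finset.sum_congr rfl (fun i _ => by rw [hg'first i r, Pi.single_apply]),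
          sum_delta2]
        exact sub_self _
      have hz := hV1inj _ hsub h0
      have hveq : v = ∑ i, c i • (g' i : Fin (2*k-2) → ZMod 2) := by
        rw [← sub_eq_zero]
        exact hz
      rw [hveq]
      exact Submodule.sum_mem _ (fun i _ => Submodule.smul_mem _ _
        (Submodule.subset_span ⟨i, hrowIA i⟩))
    · rw [Submodule.span_le]
      rintro w ⟨i, rfl⟩
      rw [hrowIA i]
      exact (g' i).2
  -- extend σ to a permutation of Fin (2k)
  obtain ⟨π, hπ1, hπ2⟩ := exists_perm_extend h2k σ
  have hπa : π a = a := hπ2 a (by omega)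
  have hπb : π b = b := hπ2 b (by omega)
  set D : Code (2*k) := Submodule.map (LinearMap.funLeft (ZMod 2) (ZMod 2) π) C with hDdef
  have hDsd : IsSelfDual D := SD.IsSelfDual.map_perm h π
  have hφπ : ∀ v : Fin (2*k) → ZMod 2,
      φ (LinearMap.funLeft (ZMod 2) (ZMod 2) π v) = φ v := by
    intro v
    rw [hφdef, phiAB_apply, phiAB_apply]
    show v (π a) + v (π b) = v a + v b
    rw [hπa, hπb]
  have hDinf : D ⊓ LinearMap.ker φ
      = Submodule.map (LinearMap.funLeft (ZMod 2) (ZMod 2) π) C0 := by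
    ext w
    constructor
    · rintro ⟨hw1, hw2⟩
      obtain ⟨v, hv, rfl⟩ := hw1
      refine ⟨v, ⟨hv, ?_⟩, rfl⟩
      have h9 := LinearMap.mem_ker.mp hw2
      rw [hφπ v] at h9
      exact LinearMap.mem_ker.mpr h9
    · rintro ⟨v, ⟨hv1, hv2⟩, rfl⟩
      refine ⟨Submodule.mem_map_of_mem hv1, ?_⟩
      have h9 := LinearMap.mem_ker.mp hv2
      rw [← hφπ v] at h9
      exact LinearMap.mem_ker.mpr h9
  have hcomm : ρ.comp (LinearMap.funLeft (ZMod 2) (ZMod 2) π)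
      = (LinearMap.funLeft (ZMod 2) (ZMod 2) σ).comp ρ := by
    apply LinearMap.ext
    intro v
    funext j
    show v (π (Fin.castLE h2k j)) = v (Fin.castLE h2k (σ j))
    rw [hπ1 j]
  have hVD : Submodule.map ρ (D ⊓ LinearMap.ker φ)
      = Submodule.span (ZMod 2) (Set.range (sysRowIA k A)) := by
    rw [hDinf, ← Submodule.map_comp, hcomm, Submodule.map_comp, ← hV1def, hV1span]
  have hneD : ∃ y ∈ D, y a ≠ y b := by
    refine ⟨LinearMap.funLeft (ZMod 2) (ZMod 2) π y0, Submodule.mem_map_of_mem hy0, ?_⟩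
    show y0 (π a) ≠ y0 (π b)
    rw [hπa, hπb]
    exact hy0ab
  obtain ⟨⟨u, huD, huab, hufirst⟩, xw, hxw⟩ := core hk a b ha hb D hDsd A hVD hneD
  have hIAsd : IsSelfDual (Submodule.span (ZMod 2) (Set.range (sysRowIA k A))) :=
    hV1span ▸ hV1sd
  rcases zmod2_cases (u a) with hua|hua
  · exact ⟨π, xw, A, by rw [hπa, hπb], hxw u huD huab hufirst hua, hIAsd⟩
  · -- compose with the transposition (a b)
    have hub : u b = 0 := by
      rcases zmod2_cases (u b) with h'|h'
      · exact h'
      · exact absurd (hua.trans h'.symm) huab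
    have hτa : Equiv.swap a b a = b := Equiv.swap_apply_left a b
    have hτb : Equiv.swap a b b = a := Equiv.swap_apply_right a b
    set π' : Equiv.Perm (Fin (2*k)) := (Equiv.swap a b).trans π with hπ'def
    have hπ'a : π' a = b := by
      show π (Equiv.swap a b a) = b
      rw [hτa, hπb]
    have hπ'b : π' b = a := by
      show π (Equiv.swap a b b) = a
      rw [hτb, hπa]
    have hfunL : LinearMap.funLeft (ZMod 2) (ZMod 2) π'
        = (LinearMap.funLeft (ZMod 2) (ZMod 2) (Equiv.swap a b)).comp
            (LinearMap.funLeft (ZMod 2) (ZMod 2) π) := by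
      apply LinearMap.ext
      intro v
      rfl
    have hD'eq : Submodule.map (LinearMap.funLeft (ZMod 2) (ZMod 2) π') C
        = Submodule.map (LinearMap.funLeft (ZMod 2) (ZMod 2) (Equiv.swap a b)) D := by
      rw [hfunL, Submodule.map_comp]
    have hD'sd : IsSelfDual
        (Submodule.map (LinearMap.funLeft (ZMod 2) (ZMod 2) (Equiv.swap a b)) D) := by
      rw [← hD'eq]
      exact SD.IsSelfDual.map_perm h π'
    have hφτ : ∀ v : Fin (2*k) → ZMod 2,
        φ (LinearMap.funLeft (ZMod 2) (ZMod 2) (Equiv.swap a b) v) = φ v := by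
      intro v
      rw [hφdef, phiAB_apply, phiAB_apply]
      show v (Equiv.swap a b a) + v (Equiv.swap a b b) = v a + v b
      rw [hτa, hτb, add_comm]
    have hD'inf : (Submodule.map (LinearMap.funLeft (ZMod 2) (ZMod 2) (Equiv.swap a b)) D)
          ⊓ LinearMap.ker φ
        = Submodule.map (LinearMap.funLeft (ZMod 2) (ZMod 2) (Equiv.swap a b))
            (D ⊓ LinearMap.ker φ) := by
      ext w
      constructor
      · rintro ⟨hw1, hw2⟩
        obtain ⟨v, hv, rfl⟩ := hw1
        refine ⟨v, ⟨hv, ?_⟩, rfl⟩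
        have h9 := LinearMap.mem_ker.mp hw2
        rw [hφτ v] at h9
        exact LinearMap.mem_ker.mpr h9
      · rintro ⟨v, ⟨hv1, hv2⟩, rfl⟩
        refine ⟨Submodule.mem_map_of_mem hv1, ?_⟩
        have h9 := LinearMap.mem_ker.mp hv2
        rw [← hφτ v] at h9
        exact LinearMap.mem_ker.mpr h9
    have hcommτ : ρ.comp (LinearMap.funLeft (ZMod 2) (ZMod 2) (Equiv.swap a b)) = ρ := by
      apply LinearMap.ext
      intro v
      funext j
      show v (Equiv.swap a b (Fin.castLE h2k j)) = v (Fin.castLE h2k j)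
      rw [Equiv.swap_apply_of_ne_of_ne]
      · show ¬ _ = _
        intro hc
        have hc' : ((Fin.castLE h2k j : Fin (2*k)) : ℕ) = (a : ℕ) := congrArg Fin.val hc
        have hj := j.isLt
        simp only [Fin.coe_castLE] at hc'
        omega
      · intro hc
        have hc' : ((Fin.castLE h2k j : Fin (2*k)) : ℕ) = (b : ℕ) := congrArg Fin.val hc
        have hj := j.isLt
        simp only [Fin.coe_castLE] at hc'
        omega
    have hVD' : Submodule.map ρ
        ((Submodule.map (LinearMap.funLeft (ZMod 2) (ZMod 2) (Equiv.swap a b)) D)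
          ⊓ LinearMap.ker φ)
        = Submodule.span (ZMod 2) (Set.range (sysRowIA k A)) := by
      rw [hD'inf, ← Submodule.map_comp, hcommτ, hVD]
    have hneD' : ∃ y ∈ Submodule.map (LinearMap.funLeft (ZMod 2) (ZMod 2) (Equiv.swap a b)) D,
        y a ≠ y b := by
      refine ⟨LinearMap.funLeft (ZMod 2) (ZMod 2) (Equiv.swap a b) u,
        Submodule.mem_map_of_mem huD, ?_⟩
      show u (Equiv.swap a b a) ≠ u (Equiv.swap a b b)
      rw [hτa, hτb]
      exact fun hc => huab hc.symm
    obtain ⟨_, xw', hxw'⟩ := core hk a b ha hb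
      (Submodule.map (LinearMap.funLeft (ZMod 2) (ZMod 2) (Equiv.swap a b)) D)
      hD'sd A hVD' hneD'
    have hu'D : LinearMap.funLeft (ZMod 2) (ZMod 2) (Equiv.swap a b) u
        ∈ Submodule.map (LinearMap.funLeft (ZMod 2) (ZMod 2) (Equiv.swap a b)) D :=
      Submodule.mem_map_of_mem huD
    have hu'a : LinearMap.funLeft (ZMod 2) (ZMod 2) (Equiv.swap a b) u a = 0 := by
      show u (Equiv.swap a b a) = 0
      rw [hτa]
      exact hub
    have hu'b : LinearMap.funLeft (ZMod 2) (ZMod 2) (Equiv.swap a b) u b = 1 := by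
      show u (Equiv.swap a b b) = 1
      rw [hτb]
      exact hua
    have hu'ab : LinearMap.funLeft (ZMod 2) (ZMod 2) (Equiv.swap a b) u a
        ≠ LinearMap.funLeft (ZMod 2) (ZMod 2) (Equiv.swap a b) u b := by
      rw [hu'a, hu'b]
      exact zero_ne_one
    have hu'first : ∀ r : Fin (k-1),
        LinearMap.funLeft (ZMod 2) (ZMod 2) (Equiv.swap a b) u ⟨(r : ℕ), by omega⟩ = 0 := by
      intro r
      show u (Equiv.swap a b (⟨(r : ℕ), by omega⟩ : Fin (2*k))) = 0
      rw [Equiv.swap_apply_of_ne_of_ne]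
      · exact hufirst r
      · intro hc
        have hc' := congrArg Fin.val hc
        have hr := r.isLt
        simp only at hc'
        omega
      · intro hc
        have hc' := congrArg Fin.val hc
        have hr := r.isLt
        simp only at hc'
        omega
    refine ⟨π', xw', A, ?_, ?_, hIAsd⟩
    · rw [hπ'a, hπ'b]
      exact Set.pair_comm b a
    · rw [hD'eq]
      exact hxw' _ hu'D hu'ab hu'first hu'a
end
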